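/- arXiv:2204.01074 — 2 statements merged into one kernel-verified Lean document; each statement's English description precedes it below -/
import Mathlib

section
/- Let G be a multigraph with maximum degree Δ and maximum multiplicity μ ≥ 2, let e ∈ E_G(x,y), and let k = Δ+μ−1. Assume χ'(G) = k+1, e is k-critical, φ is a k-edge-coloring of G−e, and F = (x, e, y_0, e_1, y_1, …, e_p, y_p) with y_0 = y is a maximal multi-fan at x with respect to e and φ. If d_G(y) = Δ and x has exactly one Δ-neighbor z' in G from V(F)∖{x,y}, then e_F(x,z) = e_G(x,z) = μ for all z ∈ V(F)∖{x}, and d_G(z) = Δ−1 for all z ∈ V(F)∖{x,y,z'}. -/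
/-- A finite multigraph: finite vertex and edge types, each edge has an unordered pair of
endvertices, and there are no loops. -/
structure Multigraph where
  V : Type
  E : Type
  [fintypeV : Fintype V]
  [fintypeE : Fintype E]
  ends : E → Sym2 V
  loopless : ∀ e, ¬ (ends e).IsDiag

attribute [instance] Multigraph.fintypeV Multigraph.fintypeE

namespace Multigraph

section Basic

variable (G : Multigraph)

/-- The degree of a vertex: the number of edges incident with it. -/
noncomputable def degree (v : G.V) : ℕ := {e : G.E | v ∈ G.ends e}.ncard

/-- The maximum degree Δ(G). -/
noncomputable def maxDegree : ℕ := sSup (Set.range G.degree)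

/-- The number of edges joining `x` and `y` (the multiplicity e_G(x,y)). -/
noncomputable def mult (x y : G.V) : ℕ := {e : G.E | G.ends e = s(x, y)}.ncard

/-- The maximum multiplicity μ(G). -/
noncomputable def maxMult : ℕ := sSup {m : ℕ | ∃ x y : G.V, G.mult x y = m}

/-- `c` is a proper edge coloring, with palette `{1,…,k}`, of the edges in `D`
(edges sharing an endvertex get distinct colors). -/
def IsProperColoringOn (k : ℕ) (D : Set G.E) (c : G.E → ℕ) : Prop :=
  (∀ e ∈ D, c e ∈ Set.Icc 1 k) ∧
  ∀ e ∈ D, ∀ f ∈ D, e ≠ f → (∃ v, v ∈ G.ends e ∧ v ∈ G.ends f) → c e ≠ c f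

/-- A proper `k`-edge-coloring of all of `G`. -/
def IsProperColoring (k : ℕ) (c : G.E → ℕ) : Prop := G.IsProperColoringOn k Set.univ c

/-- The chromatic index of the subgraph of `G` consisting of the edges in `D`
(vertices are irrelevant for edge colorings). -/
noncomputable def chromIndexOn (D : Set G.E) : ℕ := sInf {k | ∃ c, G.IsProperColoringOn k D c}

/-- The chromatic index χ'(G). -/
noncomputable def chromIndex : ℕ := G.chromIndexOn Set.univ

/-- The set of colors of the palette `{1,…,k}` missing at `v`, where only the edges in `D`
are regarded as colored. -/
def missingOn (k : ℕ) (D : Set G.E) (c : G.E → ℕ) (v : G.V) : Set ℕ :=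
  {i | i ∈ Set.Icc 1 k ∧ ∀ e ∈ D, v ∈ G.ends e → c e ≠ i}

/-- `X` is elementary: missing-color sets of distinct vertices of `X` are disjoint. -/
def IsElementaryOn (k : ℕ) (D : Set G.E) (c : G.E → ℕ) (X : Set G.V) : Prop :=
  ∀ u ∈ X, ∀ v ∈ X, u ≠ v → G.missingOn k D c u ∩ G.missingOn k D c v = ∅

/-- The boundary ∂_G(X): edges with an endvertex in `X` and an endvertex outside `X`. -/
def boundary (X : Set G.V) : Set G.E :=
  {e | (∃ v ∈ G.ends e, v ∈ X) ∧ (∃ v ∈ G.ends e, v ∉ X)}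

/-- `X` is strongly closed (w.r.t. the coloring `c` of the edges in `D`): every color on a
boundary edge of `X` is present at every vertex of `X`, and the colors on the boundary edges
are pairwise distinct. -/
def IsStronglyClosedOn (D : Set G.E) (c : G.E → ℕ) (X : Set G.V) : Prop :=
  (∀ e ∈ G.boundary X ∩ D, ∀ v ∈ X, ∃ f ∈ D, v ∈ G.ends f ∧ c f = c e) ∧
  ∀ e ∈ G.boundary X ∩ D, ∀ f ∈ G.boundary X ∩ D, e ≠ f → c e ≠ c f

end Basic

/-- A subgraph of `G`: a set of vertices together with a set of edges all of whose
endvertices belong to the vertex set. -/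
structure Subgraph (G : Multigraph) where
  verts : Set G.V
  edges : Set G.E
  support : ∀ e ∈ edges, ∀ v, v ∈ G.ends e → v ∈ verts

section Sub

variable (G : Multigraph)

/-- The whole graph, as a subgraph of itself. -/
def top : G.Subgraph := ⟨Set.univ, Set.univ, fun _ _ _ _ => Set.mem_univ _⟩

/-- `H` is a `k`-dense subgraph: it has an odd number of vertices and
`|E(H)| = (|V(H)|-1)·k/2`. -/
def IsDense (k : ℕ) (H : G.Subgraph) : Prop :=
  Odd H.verts.ncard ∧ 2 * H.edges.ncard = (H.verts.ncard - 1) * k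

/-- `H` is a `k`-dense subgraph of `G - F` (the graph obtained by deleting the edges of `F`). -/
def IsDenseIn (F : Set G.E) (k : ℕ) (H : G.Subgraph) : Prop :=
  H.edges ∩ F = ∅ ∧ G.IsDense k H

/-- `H` is a maximal `k`-dense subgraph of `G - F`. -/
def IsMaximalDenseIn (F : Set G.E) (k : ℕ) (H : G.Subgraph) : Prop :=
  G.IsDenseIn F k H ∧
  ∀ H' : G.Subgraph, G.IsDenseIn F k H' → H.verts ⊆ H'.verts → H.edges ⊆ H'.edges →
    H.verts = H'.verts ∧ H.edges = H'.edges

/-- The density Γ(H) of a subgraph `H` of `G`: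
`max { 2|E(H')|/(|V(H')|-1) : H' ⊆ H, |V(H')| ≥ 3 odd }` (and `0` if there is no such `H'`,
since in `ℝ` the supremum of the empty set is `0`). -/
noncomputable def densityOf (H : G.Subgraph) : ℝ :=
  sSup {x : ℝ | ∃ H' : G.Subgraph, H'.verts ⊆ H.verts ∧ H'.edges ⊆ H.edges ∧
    3 ≤ H'.verts.ncard ∧ Odd H'.verts.ncard ∧
    x = 2 * (H'.edges.ncard : ℝ) / ((H'.verts.ncard : ℝ) - 1)}

/-- The density Γ(G). -/
noncomputable def density : ℝ := G.densityOf G.top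

/-- `e` is a `k`-critical edge of `G`: `χ'(G-e) = k < χ'(G) = k+1`. -/
def IsCriticalEdge (k : ℕ) (e : G.E) : Prop :=
  G.chromIndexOn {e}ᶜ = k ∧ G.chromIndex = k + 1

/-- Degree of `v` in the subgraph consisting of the edges in `D`. -/
noncomputable def degreeOn (D : Set G.E) (v : G.V) : ℕ := {e : G.E | e ∈ D ∧ v ∈ G.ends e}.ncard

/-- Maximum degree of the subgraph consisting of the edges in `D`. -/
noncomputable def maxDegreeOn (D : Set G.E) : ℕ := sSup (Set.range (G.degreeOn D))

/-- Multiplicity of the pair `x,y` in the subgraph consisting of the edges in `D`. -/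
noncomputable def multOn (D : Set G.E) (x y : G.V) : ℕ :=
  {e : G.E | e ∈ D ∧ G.ends e = s(x, y)}.ncard

/-- Maximum multiplicity of the subgraph consisting of the edges in `D`. -/
noncomputable def maxMultOn (D : Set G.E) : ℕ := sSup {m : ℕ | ∃ x y : G.V, G.multOn D x y = m}

/-- The simple graph underlying the subgraph of `G` with edge set `D`. -/
def simpleOn (D : Set G.E) : SimpleGraph G.V where
  Adj a b := a ≠ b ∧ ∃ e ∈ D, G.ends e = s(a, b)
  symm := ⟨by
    rintro a b ⟨hab, e, he, hh⟩
    exact ⟨hab.symm, e, he, hh.trans Sym2.eq_swap⟩⟩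
  loopless := ⟨by rintro a ⟨h, -⟩; exact h rfl⟩

/-- The diameter (in `ℕ∞`) of the subgraph with vertex set `S` and edge set `D`:
the greatest distance between a pair of its vertices. -/
noncomputable def diamOn (S : Set G.V) (D : Set G.E) : ℕ∞ :=
  sSup {d : ℕ∞ | ∃ u ∈ S, ∃ v ∈ S, (G.simpleOn D).edist u v = d}

/-- The distance (in `ℕ∞`) between two edges of `G`: the length of a shortest path connecting
an endvertex of `e` and an endvertex of `f`. -/
noncomputable def edgeDist (e f : G.E) : ℕ∞ :=
  sInf {d : ℕ∞ | ∃ u v : G.V, u ∈ G.ends e ∧ v ∈ G.ends f ∧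
    (G.simpleOn Set.univ).edist u v = d}

/-- A matching: a set of edges no two of which share an endvertex. -/
def IsMatching (M : Set G.E) : Prop :=
  ∀ e ∈ M, ∀ f ∈ M, e ≠ f → ∀ v : G.V, v ∈ G.ends e → v ∉ G.ends f

/-- An edge `e ∈ E_G(x,y)` is fully `G`-saturated if `d_G(x) = d_G(y) = Δ(G)` and
`e_G(x,y) = μ(G)`. -/
def IsFullySaturated (e : G.E) : Prop :=
  ∃ x y : G.V, G.ends e = s(x, y) ∧ G.degree x = G.maxDegree ∧ G.degree y = G.maxDegree ∧
    G.mult x y = G.maxMult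

/-- One step along a Kempe `(α,β)`-chain: an edge of `D` colored `α` or `β` joining the
two vertices. -/
def chainStep (D : Set G.E) (c : G.E → ℕ) (α β : ℕ) (a b : G.V) : Prop :=
  ∃ e ∈ D, G.ends e = s(a, b) ∧ (c e = α ∨ c e = β)

/-- `u` and `v` lie on the same `(α,β)`-chain, i.e. `P_u(α,β) = P_v(α,β)`. -/
def sameChain (D : Set G.E) (c : G.E → ℕ) (α β : ℕ) (u v : G.V) : Prop :=
  Relation.ReflTransGen (G.chainStep D c α β) u v

end Sub

/-- The Goldberg–Seymour theorem (proved by Chen, Jing and Zang), as a hypothesis: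
every multigraph `G'` with `χ'(G') ≥ Δ(G')+2` satisfies `χ'(G') = ⌈Γ(G')⌉`. -/
def GoldbergSeymour : Prop :=
  ∀ G' : Multigraph, G'.maxDegree + 2 ≤ G'.chromIndex → (G'.chromIndex : ℤ) = ⌈G'.density⌉

/-- A (general) multi-fan at `x` with respect to the edge `e₀ ∈ E_G(x,y₀)` and the coloring
`c` of the edges in `D` with palette `{1,…,k}`: a sequence `(x, e₀, y₀, e₁, y₁, …, e_p, y_p)`
of vertices and pairwise distinct edges with `e_i ∈ E_G(x, y_i)` and, for `i ≥ 1`,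
`c(e_i)` missing at `y_j` for some `j < i`. -/
structure MultiFan (G : Multigraph) (k : ℕ) (D : Set G.E) (c : G.E → ℕ)
    (x : G.V) (e₀ : G.E) (y₀ : G.V) where
  p : ℕ
  edge : Fin (p + 1) → G.E
  vx : Fin (p + 1) → G.V
  edge_zero : edge 0 = e₀
  vx_zero : vx 0 = y₀
  ends_eq : ∀ i, G.ends (edge i) = s(x, vx i)
  edge_inj : Function.Injective edge
  fan_cond : ∀ i : Fin (p + 1), i ≠ 0 →
    ∃ j : Fin (p + 1), j < i ∧ c (edge i) ∈ G.missingOn k D c (vx j)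

namespace MultiFan

variable {G : Multigraph} {k : ℕ} {D : Set G.E} {c : G.E → ℕ} {x : G.V} {e₀ : G.E} {y₀ : G.V}

/-- The vertex set `V(F)` of a multi-fan. -/
def verts (F : MultiFan G k D c x e₀ y₀) : Set G.V := insert x (Set.range F.vx)

/-- `F` is a subsequence of `F'`. -/
def Subseq (F F' : MultiFan G k D c x e₀ y₀) : Prop :=
  ∃ ι : Fin (F.p + 1) → Fin (F'.p + 1), StrictMono ι ∧
    ∀ i, F'.edge (ι i) = F.edge i ∧ F'.vx (ι i) = F.vx i

/-- `F` is a maximal multi-fan: no multi-fan contains it as a proper subsequence. -/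
def IsMaximal (F : MultiFan G k D c x e₀ y₀) : Prop :=
  ∀ F' : MultiFan G k D c x e₀ y₀, F.Subseq F' → F'.p = F.p

/-- `F` contains no `i`-edge. -/
def NoColor (F : MultiFan G k D c x e₀ y₀) (i : ℕ) : Prop :=
  ∀ j, F.edge j ∈ D → c (F.edge j) ≠ i

/-- `F` is a multi-fan without `i`-edges that is maximal among such. -/
def IsMaximalWithout (F : MultiFan G k D c x e₀ y₀) (i : ℕ) : Prop :=
  F.NoColor i ∧
  ∀ F' : MultiFan G k D c x e₀ y₀, F'.NoColor i → F.Subseq F' → F'.p = F.p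

/-- `e_F(x,z)`: the number of edges of the multi-fan `F` joining `x` and `z`. -/
noncomputable def multAt (F : MultiFan G k D c x e₀ y₀) (z : G.V) : ℕ :=
  Nat.card {j : Fin (F.p + 1) // F.vx j = z}

end MultiFan

end Multigraph
namespace MFAux

open Multigraph

variable {G : Multigraph}

lemma exists_pair (G : Multigraph) (e : G.E) : ∃ a b : G.V, a ≠ b ∧ G.ends e = s(a, b) := by
  have hl := G.loopless e
  induction' h : G.ends e using Sym2.ind with a b
  exact ⟨a, b, fun hab => hl (by rw [h, hab]; exact Sym2.mk_isDiag_iff.2 rfl), rfl⟩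

lemma mem_missingOn_iff {G : Multigraph} {k : ℕ} {D : Set G.E} {c : G.E → ℕ} {v : G.V} {i : ℕ} :
    i ∈ G.missingOn k D c v ↔ i ∈ Set.Icc 1 k ∧ ∀ e ∈ D, v ∈ G.ends e → c e ≠ i := Iff.rfl

/-- From `χ'(G) = k+1` we get that there is no proper `k`-edge-coloring of `G`. -/
lemma no_coloring {G : Multigraph} {k : ℕ} (hχ : G.chromIndex = k + 1) :
    ¬ ∃ c, G.IsProperColoringOn k Set.univ c := by
  intro hc
  have : G.chromIndex ≤ k := Nat.sInf_le hc
  omega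

lemma degree_le_maxDegree (G : Multigraph) (v : G.V) : G.degree v ≤ G.maxDegree :=
  le_csSup ((Set.finite_range _).bddAbove) ⟨v, rfl⟩

lemma mult_le_maxMult (G : Multigraph) (a b : G.V) : G.mult a b ≤ G.maxMult := by
  refine le_csSup ?_ ⟨a, b, rfl⟩
  have : {m : ℕ | ∃ x y : G.V, G.mult x y = m} =
      Set.range (fun p : G.V × G.V => G.mult p.1 p.2) := by
    ext m; constructor
    · rintro ⟨a, b, h⟩; exact ⟨⟨a, b⟩, h⟩
    · rintro ⟨⟨a, b⟩, h⟩; exact ⟨a, b, h⟩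
  rw [this]
  exact (Set.finite_range _).bddAbove

lemma ncard_setOf_eq_card_filter (G : Multigraph) (P : G.E → Prop) [DecidablePred P] :
    {e : G.E | P e}.ncard = (Finset.univ.filter P).card := by
  rw [← Set.ncard_coe_finset]
  congr 1
  ext e; simp

/-- Missing colors: `k ≤ |missing| + #(D-edges at v)`. -/
lemma missing_card (G : Multigraph) (k : ℕ) (D : Set G.E) (c : G.E → ℕ) (v : G.V) :
    k ≤ (G.missingOn k D c v).ncard + {e : G.E | e ∈ D ∧ v ∈ G.ends e}.ncard := by
  classical
  have h1 : G.missingOn k D c v = Set.Icc 1 k \ (c '' {e : G.E | e ∈ D ∧ v ∈ G.ends e}) := by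
    ext i
    simp only [mem_missingOn_iff, Set.mem_diff, Set.mem_image, Set.mem_setOf_eq]
    constructor
    · rintro ⟨hI, h⟩
      exact ⟨hI, fun ⟨e, ⟨heD, hev⟩, hce⟩ => h e heD hev hce⟩
    · rintro ⟨hI, h⟩
      exact ⟨hI, fun e heD hev hce => h ⟨e, ⟨heD, hev⟩, hce⟩⟩
  have hIcc : (Set.Icc 1 k).ncard = k := by
    have : (Set.Icc 1 k : Set ℕ) = ↑(Finset.Icc 1 k) := by ext i; simp
    rw [this, Set.ncard_coe_finset, Nat.card_Icc]; omega
  have hfin : (G.missingOn k D c v).Finite :=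
    (Set.finite_Icc 1 k).subset (fun i hi => hi.1)
  have hsub : Set.Icc 1 k ⊆ (G.missingOn k D c v) ∪ (c '' {e : G.E | e ∈ D ∧ v ∈ G.ends e}) := by
    rw [h1]; intro i hi
    by_cases h : i ∈ c '' {e : G.E | e ∈ D ∧ v ∈ G.ends e}
    · exact Or.inr h
    · exact Or.inl ⟨hi, h⟩
  calc k = (Set.Icc 1 k).ncard := hIcc.symm
    _ ≤ ((G.missingOn k D c v) ∪ (c '' {e : G.E | e ∈ D ∧ v ∈ G.ends e})).ncard :=
        Set.ncard_le_ncard hsub (hfin.union (Set.toFinite _))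
    _ ≤ (G.missingOn k D c v).ncard + (c '' {e : G.E | e ∈ D ∧ v ∈ G.ends e}).ncard :=
        Set.ncard_union_le _ _
    _ ≤ _ := by
        gcongr
        exact Set.ncard_image_le (Set.toFinite _)


/-- Truncate a multifan at index `m`, possibly with respect to a new coloring `c'`,
provided the fan conditions can be re-established. -/
noncomputable def retract {G : Multigraph} {k : ℕ} {D : Set G.E} {c : G.E → ℕ}
    {x : G.V} {e₀ : G.E} {y₀ : G.V} (F : MultiFan G k D c x e₀ y₀)
    (m : ℕ) (hm : m ≤ F.p) (c' : G.E → ℕ)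
    (h : ∀ i : Fin (F.p + 1), i ≠ 0 → i.val ≤ m →
      ∃ l : Fin (F.p + 1), l.val < i.val ∧ c' (F.edge i) ∈ G.missingOn k D c' (F.vx l)) :
    MultiFan G k D c' x e₀ y₀ where
  p := m
  edge := fun i => F.edge (Fin.castLE (by omega) i)
  vx := fun i => F.vx (Fin.castLE (by omega) i)
  edge_zero := by
    show F.edge (Fin.castLE (by omega) 0) = e₀
    have h0 : (Fin.castLE (by omega : m + 1 ≤ F.p + 1) 0) = (0 : Fin (F.p + 1)) :=
      Fin.ext (by simp)
    rw [h0, F.edge_zero]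
  vx_zero := by
    show F.vx (Fin.castLE (by omega) 0) = y₀
    have h0 : (Fin.castLE (by omega : m + 1 ≤ F.p + 1) 0) = (0 : Fin (F.p + 1)) :=
      Fin.ext (by simp)
    rw [h0, F.vx_zero]
  ends_eq := fun i => F.ends_eq _
  edge_inj := fun a b hab => by
    have h2 := F.edge_inj hab
    have h3 := congrArg Fin.val h2
    simp only [Fin.coe_castLE] at h3
    exact Fin.ext h3
  fan_cond := by
    intro i hi
    have hi' : (Fin.castLE (by omega : m + 1 ≤ F.p + 1) i) ≠ 0 := by
      intro hcon
      apply hi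
      apply Fin.ext
      simpa using congrArg Fin.val hcon
    obtain ⟨l, hl, hmem⟩ := h _ hi' (by
      have := i.isLt; simp only [Fin.coe_castLE]; omega)
    have hlm : l.val < m + 1 := by
      have := i.isLt; simp only [Fin.coe_castLE] at hl; omega
    refine ⟨⟨l.val, hlm⟩, ?_, ?_⟩
    · simp only [Fin.lt_def, Fin.coe_castLE] at hl ⊢; exact hl
    · show c' (F.edge (Fin.castLE (by omega) i)) ∈
        G.missingOn k D c' (F.vx (Fin.castLE (by omega) ⟨l.val, hlm⟩))
      have : (Fin.castLE (by omega : m + 1 ≤ F.p + 1) ⟨l.val, hlm⟩) = l := Fin.ext rfl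
      rw [this]
      exact hmem

@[simp] lemma retract_p {G : Multigraph} {k : ℕ} {D : Set G.E} {c : G.E → ℕ}
    {x : G.V} {e₀ : G.E} {y₀ : G.V} (F : MultiFan G k D c x e₀ y₀)
    (m : ℕ) (hm : m ≤ F.p) (c' : G.E → ℕ) (h) :
    (retract F m hm c' h).p = m := rfl

lemma retract_vx {G : Multigraph} {k : ℕ} {D : Set G.E} {c : G.E → ℕ}
    {x : G.V} {e₀ : G.E} {y₀ : G.V} (F : MultiFan G k D c x e₀ y₀)
    (m : ℕ) (hm : m ≤ F.p) (c' : G.E → ℕ) (h) (i : Fin (m + 1)) :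
    (retract F m hm c' h).vx i = F.vx (Fin.castLE (by omega) i) := rfl

lemma edge_mem_D {G : Multigraph} {k : ℕ} {D : Set G.E} {c : G.E → ℕ}
    {x : G.V} {e₀ : G.E} {y₀ : G.V} (F : MultiFan G k D c x e₀ y₀)
    {j : Fin (F.p + 1)} (hj : j ≠ 0) : F.edge j ≠ e₀ := by
  intro hcon
  exact hj (F.edge_inj (by rw [hcon, F.edge_zero]))

lemma x_mem_ends {G : Multigraph} {k : ℕ} {D : Set G.E} {c : G.E → ℕ}
    {x : G.V} {e₀ : G.E} {y₀ : G.V} (F : MultiFan G k D c x e₀ y₀)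
    (j : Fin (F.p + 1)) : x ∈ G.ends (F.edge j) := by
  rw [F.ends_eq j]; exact Sym2.mem_mk_left _ _

lemma vx_mem_ends {G : Multigraph} {k : ℕ} {D : Set G.E} {c : G.E → ℕ}
    {x : G.V} {e₀ : G.E} {y₀ : G.V} (F : MultiFan G k D c x e₀ y₀)
    (j : Fin (F.p + 1)) : F.vx j ∈ G.ends (F.edge j) := by
  rw [F.ends_eq j]; exact Sym2.mem_mk_right _ _

lemma vx_ne_x {G : Multigraph} {k : ℕ} {D : Set G.E} {c : G.E → ℕ}
    {x : G.V} {e₀ : G.E} {y₀ : G.V} (F : MultiFan G k D c x e₀ y₀)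
    (j : Fin (F.p + 1)) : F.vx j ≠ x := by
  intro hcon
  apply G.loopless (F.edge j)
  rw [F.ends_eq j, hcon]
  exact Sym2.mk_isDiag_iff.2 rfl

/-- **Fan shift.** No color is missing at both `x` and a vertex of a multi-fan at `x`. -/
lemma stepB {G : Multigraph} {k : ℕ} {x y : G.V} {e₀ : G.E}
    (hχ : G.chromIndex = k + 1) :
    ∀ (n : ℕ) (c : G.E → ℕ), G.IsProperColoringOn k {e₀}ᶜ c →
      ∀ (F : MultiFan G k {e₀}ᶜ c x e₀ y) (j : Fin (F.p + 1)), j.val = n →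
      ∀ α, α ∈ G.missingOn k {e₀}ᶜ c x → α ∈ G.missingOn k {e₀}ᶜ c (F.vx j) → False := by
  intro n
  induction n using Nat.strong_induction_on with
  | _ n IH =>
  intro c hc F j hjn α hx hv
  classical
  by_cases h0 : j = 0
  · -- color `e₀` with `α`, contradicting `χ'(G) = k+1`
    subst h0
    rw [F.vx_zero] at hv
    have hends0 : G.ends e₀ = s(x, y) := by
      have h := F.ends_eq 0
      rw [F.edge_zero, F.vx_zero] at h
      exact h
    set c' := Function.update c e₀ α with hc'
    apply no_coloring hχ
    refine ⟨c', ?_, ?_⟩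
    · intro e _
      by_cases he : e = e₀
      · subst he; simp only [hc', Function.update_self]; exact hx.1
      · rw [hc', Function.update_of_ne he]
        exact hc.1 e (Set.mem_compl_singleton_iff.2 he)
    · intro e _ f _ hef ⟨v, hve, hvf⟩
      by_cases he : e = e₀ <;> by_cases hf : f = e₀
      · exact absurd (he.trans hf.symm) hef
      · subst he
        rw [hc', Function.update_self, Function.update_of_ne hf]
        intro hcon
        rw [hends0, Sym2.mem_iff] at hve
        rcases hve with rfl | rfl
        · exact hx.2 f (Set.mem_compl_singleton_iff.2 hf) hvf hcon.symm
        · exact hv.2 f (Set.mem_compl_singleton_iff.2 hf) hvf hcon.symm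
      · subst hf
        rw [hc', Function.update_self, Function.update_of_ne he]
        intro hcon
        rw [hends0, Sym2.mem_iff] at hvf
        rcases hvf with rfl | rfl
        · exact hx.2 e (Set.mem_compl_singleton_iff.2 he) hve hcon
        · exact hv.2 e (Set.mem_compl_singleton_iff.2 he) hve hcon
      · rw [hc', Function.update_of_ne he, Function.update_of_ne hf]
        exact hc.2 e (Set.mem_compl_singleton_iff.2 he) f (Set.mem_compl_singleton_iff.2 hf)
          hef ⟨v, hve, hvf⟩
  · -- recolor the fan edge `e_j` with `α` and recurse
    obtain ⟨l, hl, hml⟩ := F.fan_cond j h0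
    set ej := F.edge j with hej
    have hejD : ej ≠ e₀ := edge_mem_D F h0
    have hxej : x ∈ G.ends ej := x_mem_ends F j
    have hvjej : F.vx j ∈ G.ends ej := vx_mem_ends F j
    have hαα' : c ej ≠ α := hx.2 ej (Set.mem_compl_singleton_iff.2 hejD) hxej
    set c' := Function.update c ej α with hc'def
    have hc'ej : c' ej = α := Function.update_self _ _ _
    have hc'ne : ∀ f, f ≠ ej → c' f = c f := fun f hf => Function.update_of_ne hf _ _
    have hc' : G.IsProperColoringOn k {e₀}ᶜ c' := by
      constructor
      · intro e he
        by_cases h : e = ej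
        · subst h; rw [hc'ej]; exact hx.1
        · rw [hc'ne e h]; exact hc.1 e he
      · intro e heD f hfD hef ⟨v, hve, hvf⟩
        by_cases h1 : e = ej <;> by_cases h2 : f = ej
        · exact absurd (h1.trans h2.symm) hef
        · subst h1
          rw [hc'ej, hc'ne f h2]
          intro hcon
          rw [F.ends_eq j, Sym2.mem_iff] at hve
          rcases hve with rfl | rfl
          · exact hx.2 f hfD hvf hcon.symm
          · exact hv.2 f hfD hvf hcon.symm
        · subst h2
          rw [hc'ej, hc'ne e h1]
          intro hcon
          rw [F.ends_eq j, Sym2.mem_iff] at hvf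
          rcases hvf with rfl | rfl
          · exact hx.2 e heD hve hcon
          · exact hv.2 e heD hve hcon
        · rw [hc'ne e h1, hc'ne f h2]
          exact hc.2 e heD f hfD hef ⟨v, hve, hvf⟩
    have hα'x : c ej ∈ G.missingOn k {e₀}ᶜ c' x := by
      refine ⟨hc.1 ej (Set.mem_compl_singleton_iff.2 hejD), ?_⟩
      intro f hfD hxf
      by_cases hf : f = ej
      · subst hf; rw [hc'ej]; exact fun hcon => hαα' hcon.symm
      · rw [hc'ne f hf]
        exact hc.2 f hfD ej (Set.mem_compl_singleton_iff.2 hejD) hf ⟨x, hxf, hxej⟩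
    have hα'l : c ej ∈ G.missingOn k {e₀}ᶜ c' (F.vx l) := by
      refine ⟨hml.1, ?_⟩
      intro f hfD hvf
      by_cases hf : f = ej
      · subst hf; rw [hc'ej]; exact fun hcon => hαα' hcon.symm
      · rw [hc'ne f hf]; exact hml.2 f hfD hvf
    have hllt : l.val ≤ F.p := by omega
    have hcond : ∀ i : Fin (F.p + 1), i ≠ 0 → i.val ≤ l.val →
        ∃ l' : Fin (F.p + 1), l'.val < i.val ∧
          c' (F.edge i) ∈ G.missingOn k {e₀}ᶜ c' (F.vx l') := by
      intro i hi0 hile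
      obtain ⟨l', hl', hm'⟩ := F.fan_cond i hi0
      have hneq : F.edge i ≠ ej := by
        intro hcon
        have := F.edge_inj hcon
        have : i.val = j.val := congrArg Fin.val this
        have hlj : l.val < j.val := hl
        omega
      refine ⟨l', hl', ?_⟩
      rw [hc'ne _ hneq]
      refine ⟨hm'.1, ?_⟩
      intro f hfD hvf
      by_cases hf : f = ej
      · subst hf; rw [hc'ej]
        exact fun hcon => hx.2 (F.edge i)
          (Set.mem_compl_singleton_iff.2 (edge_mem_D F hi0)) (x_mem_ends F i) hcon.symm
      · rw [hc'ne f hf]; exact hm'.2 f hfD hvf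
    have hlval : l.val < n := by
      have hlj : l.val < j.val := hl
      omega
    refine IH l.val hlval c' hc' (retract F l.val hllt c' hcond)
      ⟨l.val, by simp only [retract_p]; omega⟩ rfl (c ej) hα'x ?_
    erw [retract_vx]
    have h9 : (Fin.castLE (by omega) (⟨l.val, by omega⟩ : Fin (l.val + 1))) = l :=
      Fin.ext rfl
    erw [h9]
    exact hα'l

section Swap

variable {G : Multigraph} (e₀ : G.E) (c : G.E → ℕ) (α β : ℕ) (C : Set G.V)

open Classical in
/-- Swap the colors `α` and `β` on all edges (other than `e₀`) meeting `C`. -/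
noncomputable def swapCol : G.E → ℕ := fun e =>
  if e ≠ e₀ ∧ (∃ v ∈ G.ends e, v ∈ C) ∧ c e = α then β
  else if e ≠ e₀ ∧ (∃ v ∈ G.ends e, v ∈ C) ∧ c e = β then α else c e

variable {e₀ c α β C}

/-- `C` is closed under `(α,β)`-edges. -/
def SwClosed : Prop := ∀ e, e ≠ e₀ → (c e = α ∨ c e = β) →
  (∃ v ∈ G.ends e, v ∈ C) → ∀ w ∈ G.ends e, w ∈ C

lemma swapCol_eq_of_not_mem (hcl : SwClosed (G := G) (e₀ := e₀) (c := c) (α := α) (β := β) (C := C))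
    {e : G.E} {v : G.V} (hv : v ∈ G.ends e) (hvC : v ∉ C) : swapCol e₀ c α β C e = c e := by
  unfold swapCol
  rw [if_neg, if_neg]
  · rintro ⟨he, hex, hce⟩
    exact hvC (hcl e he (Or.inr hce) hex v hv)
  · rintro ⟨he, hex, hce⟩
    exact hvC (hcl e he (Or.inl hce) hex v hv)

lemma swapCol_eq_gamma {γ : ℕ} (hγα : γ ≠ α) (hγβ : γ ≠ β) (e : G.E) :
    swapCol e₀ c α β C e = γ ↔ c e = γ := by
  unfold swapCol
  split_ifs with h1 h2
  · constructor
    · intro h; exact absurd h hγβ.symm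
    · intro h; exact absurd (h1.2.2.symm.trans h) hγα.symm
  · constructor
    · intro h; exact absurd h hγα.symm
    · intro h; exact absurd (h2.2.2.symm.trans h) hγβ.symm
  · exact Iff.rfl

lemma swapCol_mem_pair (e : G.E) :
    swapCol e₀ c α β C e = c e ∨ (swapCol e₀ c α β C e = β ∧ c e = α) ∨
      (swapCol e₀ c α β C e = α ∧ c e = β) := by
  unfold swapCol
  split_ifs with h1 h2
  · exact Or.inr (Or.inl ⟨rfl, h1.2.2⟩)
  · exact Or.inr (Or.inr ⟨rfl, h2.2.2⟩)
  · exact Or.inl rfl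

lemma swapCol_spec (hαβ : α ≠ β) {e : G.E} (he : e ≠ e₀)
    (hex : ∃ v ∈ G.ends e, v ∈ C) :
    (c e = α → swapCol e₀ c α β C e = β) ∧ (c e = β → swapCol e₀ c α β C e = α) ∧
      (c e ≠ α → c e ≠ β → swapCol e₀ c α β C e = c e) := by
  unfold swapCol
  refine ⟨fun h => ?_, fun h => ?_, fun h1 h2 => ?_⟩
  · rw [if_pos ⟨he, hex, h⟩]
  · rw [if_neg, if_pos ⟨he, hex, h⟩]
    rintro ⟨-, -, hα⟩
    exact hαβ (hα.symm.trans h)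
  · rw [if_neg, if_neg]
    · rintro ⟨-, -, h⟩; exact h2 h
    · rintro ⟨-, -, h⟩; exact h1 h

/-- Swapping preserves properness. -/
lemma swapCol_proper {k : ℕ} (hc : G.IsProperColoringOn k {e₀}ᶜ c)
    (hα : α ∈ Set.Icc 1 k) (hβ : β ∈ Set.Icc 1 k) (hαβ : α ≠ β)
    (hcl : SwClosed (G := G) (e₀ := e₀) (c := c) (α := α) (β := β) (C := C)) :
    G.IsProperColoringOn k {e₀}ᶜ (swapCol e₀ c α β C) := by
  constructor
  · intro e he
    rcases swapCol_mem_pair (G := G) (e₀ := e₀) (c := c) (α := α) (β := β) (C := C) e with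
      h | ⟨h, _⟩ | ⟨h, _⟩
    · rw [h]; exact hc.1 e he
    · rw [h]; exact hβ
    · rw [h]; exact hα
  · intro e heD f hfD hef hshare
    obtain ⟨v, hve, hvf⟩ := hshare
    have heD' : e ≠ e₀ := Set.mem_compl_singleton_iff.1 heD
    have hfD' : f ≠ e₀ := Set.mem_compl_singleton_iff.1 hfD
    have hne := hc.2 e heD f hfD hef ⟨v, hve, hvf⟩
    by_cases hvC : v ∈ C
    · have hexe : ∃ w ∈ G.ends e, w ∈ C := ⟨v, hve, hvC⟩
      have hexf : ∃ w ∈ G.ends f, w ∈ C := ⟨v, hvf, hvC⟩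
      obtain ⟨he1, he2, he3⟩ := swapCol_spec (G := G) (c := c) (C := C) hαβ heD' hexe
      obtain ⟨hf1, hf2, hf3⟩ := swapCol_spec (G := G) (c := c) (C := C) hαβ hfD' hexf
      by_cases hce1 : c e = α <;> by_cases hcf1 : c f = α
      · exact absurd (hce1.trans hcf1.symm) hne
      · by_cases hcf2 : c f = β
        · rw [he1 hce1, hf2 hcf2]; exact hαβ.symm
        · rw [he1 hce1, hf3 hcf1 hcf2]; exact fun h => hcf2 h.symm
      · by_cases hce2 : c e = β
        · rw [he2 hce2, hf1 hcf1]; exact hαβ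
        · rw [he3 hce1 hce2, hf1 hcf1]; exact fun h => hce2 h
      · by_cases hce2 : c e = β <;> by_cases hcf2 : c f = β
        · exact absurd (hce2.trans hcf2.symm) hne
        · rw [he2 hce2, hf3 hcf1 hcf2]; exact fun h => hcf1 h.symm
        · rw [he3 hce1 hce2, hf2 hcf2]; exact fun h => hce1 h
        · rw [he3 hce1 hce2, hf3 hcf1 hcf2]; exact hne
    · rw [swapCol_eq_of_not_mem hcl hve hvC, swapCol_eq_of_not_mem hcl hvf hvC]
      exact hne

lemma swapCol_eq_alpha_iff (hαβ : α ≠ β) {e : G.E} (he : e ≠ e₀)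
    (hex : ∃ v ∈ G.ends e, v ∈ C) :
    swapCol e₀ c α β C e = α ↔ c e = β := by
  obtain ⟨h1, h2, h3⟩ := swapCol_spec (G := G) (c := c) (C := C) hαβ he hex
  by_cases hce1 : c e = α
  · rw [h1 hce1]
    exact ⟨fun h => absurd h hαβ.symm, fun h => absurd (hce1.symm.trans h) hαβ⟩
  · by_cases hce2 : c e = β
    · simp [h2 hce2, hce2]
    · rw [h3 hce1 hce2]
      exact ⟨fun h => absurd h hce1, fun h => absurd h hce2⟩

lemma swapCol_eq_beta_iff (hαβ : α ≠ β) {e : G.E} (he : e ≠ e₀)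
    (hex : ∃ v ∈ G.ends e, v ∈ C) :
    swapCol e₀ c α β C e = β ↔ c e = α := by
  obtain ⟨h1, h2, h3⟩ := swapCol_spec (G := G) (c := c) (C := C) hαβ he hex
  by_cases hce1 : c e = α
  · simp [h1 hce1, hce1]
  · by_cases hce2 : c e = β
    · rw [h2 hce2]
      exact ⟨fun h => absurd h hαβ, fun h => absurd (hce2.symm.trans h) hαβ.symm⟩
    · rw [h3 hce1 hce2]
      exact ⟨fun h => absurd h hce2, fun h => absurd h hce1⟩

variable {k : ℕ}

/-- Missing sets are unchanged outside the swapped component. -/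
lemma swapCol_missing_not_mem
    (hcl : SwClosed (G := G) (e₀ := e₀) (c := c) (α := α) (β := β) (C := C))
    {v : G.V} (hv : v ∉ C) (γ : ℕ) :
    γ ∈ G.missingOn k {e₀}ᶜ (swapCol e₀ c α β C) v ↔ γ ∈ G.missingOn k {e₀}ᶜ c v := by
  simp only [mem_missingOn_iff]
  constructor
  · rintro ⟨hI, h⟩
    refine ⟨hI, fun e he hve => ?_⟩
    rw [← swapCol_eq_of_not_mem hcl hve hv]
    exact h e he hve
  · rintro ⟨hI, h⟩
    refine ⟨hI, fun e he hve => ?_⟩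
    rw [swapCol_eq_of_not_mem hcl hve hv]
    exact h e he hve

/-- Missing status of colors other than `α`, `β` is never changed by the swap. -/
lemma swapCol_missing_gamma {v : G.V} {γ : ℕ} (hγα : γ ≠ α) (hγβ : γ ≠ β) :
    γ ∈ G.missingOn k {e₀}ᶜ (swapCol e₀ c α β C) v ↔ γ ∈ G.missingOn k {e₀}ᶜ c v := by
  simp only [mem_missingOn_iff]
  constructor
  · rintro ⟨hI, h⟩
    refine ⟨hI, fun e he hve => fun hcon => h e he hve ?_⟩
    exact (swapCol_eq_gamma (G := G) (e₀ := e₀) (c := c) (C := C) hγα hγβ e).2 hcon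
  · rintro ⟨hI, h⟩
    refine ⟨hI, fun e he hve => fun hcon => h e he hve ?_⟩
    exact (swapCol_eq_gamma (G := G) (e₀ := e₀) (c := c) (C := C) hγα hγβ e).1 hcon

/-- Inside the swapped component, missing `α` after the swap is missing `β` before. -/
lemma swapCol_missing_alpha (hαβ : α ≠ β) (hα : α ∈ Set.Icc 1 k) (hβ : β ∈ Set.Icc 1 k)
    {v : G.V} (hv : v ∈ C) :
    α ∈ G.missingOn k {e₀}ᶜ (swapCol e₀ c α β C) v ↔ β ∈ G.missingOn k {e₀}ᶜ c v := by
  simp only [mem_missingOn_iff]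
  constructor
  · rintro ⟨-, h⟩
    refine ⟨hβ, fun e he hve => fun hcon => h e he hve ?_⟩
    exact (swapCol_eq_alpha_iff (G := G) (c := c) hαβ
      (Set.mem_compl_singleton_iff.1 he) ⟨v, hve, hv⟩).2 hcon
  · rintro ⟨-, h⟩
    refine ⟨hα, fun e he hve => fun hcon => h e he hve ?_⟩
    exact (swapCol_eq_alpha_iff (G := G) (c := c) hαβ
      (Set.mem_compl_singleton_iff.1 he) ⟨v, hve, hv⟩).1 hcon

/-- Inside the swapped component, missing `β` after the swap is missing `α` before. -/
lemma swapCol_missing_beta (hαβ : α ≠ β) (hα : α ∈ Set.Icc 1 k) (hβ : β ∈ Set.Icc 1 k)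
    {v : G.V} (hv : v ∈ C) :
    β ∈ G.missingOn k {e₀}ᶜ (swapCol e₀ c α β C) v ↔ α ∈ G.missingOn k {e₀}ᶜ c v := by
  simp only [mem_missingOn_iff]
  constructor
  · rintro ⟨-, h⟩
    refine ⟨hα, fun e he hve => fun hcon => h e he hve ?_⟩
    exact (swapCol_eq_beta_iff (G := G) (c := c) hαβ
      (Set.mem_compl_singleton_iff.1 he) ⟨v, hve, hv⟩).2 hcon
  · rintro ⟨-, h⟩
    refine ⟨hβ, fun e he hve => fun hcon => h e he hve ?_⟩
    exact (swapCol_eq_beta_iff (G := G) (c := c) hαβ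
      (Set.mem_compl_singleton_iff.1 he) ⟨v, hve, hv⟩).1 hcon

end Swap

section Count

variable {G : Multigraph}

/-- The reachable set of the `(α,β)`-chain graph is closed. -/
lemma reach_closed (e₀ : G.E) (c : G.E → ℕ) (α β : ℕ) (r : G.V) :
    SwClosed (G := G) (e₀ := e₀) (c := c) (α := α) (β := β)
      (C := {v | (G.simpleOn {e | e ≠ e₀ ∧ (c e = α ∨ c e = β)}).Reachable r v}) := by
  intro e he hcol ⟨v, hv, hvC⟩ w hw
  by_cases hvw : w = v
  · subst hvw; exact hvC
  obtain ⟨a, b, hab, habe⟩ := exists_pair G e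
  have hends : G.ends e = s(v, w) := by
    rw [habe, Sym2.mem_iff] at hv hw
    rcases hv with rfl | rfl <;> rcases hw with rfl | rfl
    · exact absurd rfl hvw
    · exact habe
    · rw [habe]; exact Sym2.eq_swap
    · exact absurd rfl hvw
  have hadj : (G.simpleOn {e | e ≠ e₀ ∧ (c e = α ∨ c e = β)}).Adj v w :=
    ⟨fun h => hvw h.symm, e, ⟨he, hcol⟩, hends⟩
  exact Set.mem_setOf_eq ▸ (Set.mem_setOf_eq ▸ hvC).trans hadj.reachable

/-- **Component counting.** Three distinct vertices of one `(α,β)`-chain component cannot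
all miss one of the two colors. -/
lemma count_three (k : ℕ) (e₀ : G.E) (c : G.E → ℕ)
    (hc : G.IsProperColoringOn k {e₀}ᶜ c) (α β : ℕ) (hαβ : α ≠ β)
    (u₁ u₂ u₃ : G.V) (γ₁ γ₂ γ₃ : ℕ)
    (hγ1 : γ₁ = α ∨ γ₁ = β) (hγ2 : γ₂ = α ∨ γ₂ = β) (hγ3 : γ₃ = α ∨ γ₃ = β)
    (hm1 : γ₁ ∈ G.missingOn k {e₀}ᶜ c u₁) (hm2 : γ₂ ∈ G.missingOn k {e₀}ᶜ c u₂)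
    (hm3 : γ₃ ∈ G.missingOn k {e₀}ᶜ c u₃)
    (h12 : u₁ ≠ u₂) (h13 : u₁ ≠ u₃) (h23 : u₂ ≠ u₃)
    (r2 : (G.simpleOn {e | e ≠ e₀ ∧ (c e = α ∨ c e = β)}).Reachable u₁ u₂)
    (r3 : (G.simpleOn {e | e ≠ e₀ ∧ (c e = α ∨ c e = β)}).Reachable u₁ u₃) : False := by
  classical
  set H := G.simpleOn {e | e ≠ e₀ ∧ (c e = α ∨ c e = β)} with hH
  set C : Set G.V := {v | H.Reachable u₁ v} with hCdef
  have hcl := reach_closed e₀ c α β u₁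
  have hu1 : u₁ ∈ C := Set.mem_setOf_eq ▸ SimpleGraph.Reachable.refl u₁
  have hu2 : u₂ ∈ C := r2
  have hu3 : u₃ ∈ C := r3
  set CF : Finset G.V := (Set.toFinite C).toFinset with hCF
  set EF : Finset G.E := Finset.univ.filter
    (fun e => (e ≠ e₀ ∧ (c e = α ∨ c e = β)) ∧ ∃ v ∈ G.ends e, v ∈ C) with hEF
  -- Step (a): |C| ≤ |EF| + 1
  have key : ∀ v, v ∈ C → v ≠ u₁ → ∃ (e : G.E) (w : G.V),
      ((e ≠ e₀ ∧ (c e = α ∨ c e = β)) ∧ G.ends e = s(w, v)) ∧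
        H.dist u₁ w + 1 = H.dist u₁ v := by
    intro v hv hne
    have hreach : H.Reachable u₁ v := hv
    obtain ⟨p, hp⟩ := hreach.exists_walk_length_eq_dist
    obtain ⟨w, hadj, q, hq⟩ := SimpleGraph.Walk.exists_eq_cons_of_ne hne p.reverse
    have hql : q.length + 1 = p.length := by
      have := SimpleGraph.Walk.length_reverse p
      rw [hq] at this
      simpa using this
    have hdw : H.dist u₁ w ≤ q.length := by
      have := SimpleGraph.dist_le q.reverse
      rwa [SimpleGraph.Walk.length_reverse] at this
    have hreachw : H.Reachable u₁ w := ⟨q.reverse⟩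
    obtain ⟨q', hq'⟩ := hreachw.exists_walk_length_eq_dist
    have hdvw : H.dist u₁ v ≤ H.dist u₁ w + 1 := by
      have := SimpleGraph.dist_le (q'.append hadj.symm.toWalk)
      rwa [SimpleGraph.Walk.length_append, hq',
        show hadj.symm.toWalk.length = 1 from rfl] at this
    obtain ⟨hvw, e, heD, hends⟩ := hadj
    refine ⟨e, w, ⟨heD, by rw [hends]; exact Sym2.eq_swap⟩, ?_⟩
    have h1 : H.dist u₁ v = p.length := hp.symm
    omega
  have hEne : Nonempty G.E := ⟨e₀⟩
  choose! KE KW hKE hKdist using key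
  have hstepa : CF.card ≤ EF.card + 1 := by
    have hinj : Set.InjOn KE ((CF.erase u₁ : Finset G.V) : Set G.V) := by
      intro v₁ hv₁ v₂ hv₂ hKeq
      simp only [Finset.coe_erase, Set.mem_diff, Finset.mem_coe, Set.Finite.mem_toFinset,
        Set.mem_singleton_iff, hCF] at hv₁ hv₂
      obtain ⟨hv₁C, hv₁ne⟩ := hv₁
      obtain ⟨hv₂C, hv₂ne⟩ := hv₂
      by_contra hne
      have h1 := (hKE v₁ hv₁C hv₁ne).2
      have h2 := (hKE v₂ hv₂C hv₂ne).2
      rw [hKeq] at h1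
      rw [h1, Sym2.eq_iff] at h2
      rcases h2 with ⟨-, h⟩ | ⟨hw1, hw2⟩
      · exact hne h
      have d1 := hKdist v₁ hv₁C hv₁ne
      have d2 := hKdist v₂ hv₂C hv₂ne
      rw [hw1] at d1
      rw [← hw2] at d2
      omega
    have hmaps : ∀ v ∈ CF.erase u₁, KE v ∈ EF := by
      intro v hv
      rw [Finset.mem_erase, hCF, Set.Finite.mem_toFinset] at hv
      obtain ⟨hvne, hvC⟩ := hv
      obtain ⟨hprop, hends⟩ := hKE v hvC hvne
      rw [hEF, Finset.mem_filter]
      exact ⟨Finset.mem_univ _, hprop, v, by rw [hends]; exact Sym2.mem_mk_right _ _, hvC⟩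
    have := Finset.card_le_card_of_injOn KE hmaps hinj
    have hu1CF : u₁ ∈ CF := by rw [hCF, Set.Finite.mem_toFinset]; exact hu1
    have := Finset.card_erase_of_mem hu1CF
    omega
  -- Step (b): 2|EF| ≤ 2|CF| - 3
  choose KA KB hKAB hKends using exists_pair G
  set TRI : Finset (G.V × ℕ) := {(u₁, γ₁), (u₂, γ₂), (u₃, γ₃)} with hTRI
  have hTRIcard : TRI.card = 3 := by
    rw [hTRI]
    rw [Finset.card_insert_of_notMem, Finset.card_insert_of_notMem,
      Finset.card_singleton]
    · simp only [Finset.mem_singleton, Prod.mk.injEq, not_and]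
      intro h; exact absurd h h23
    · simp only [Finset.mem_insert, Finset.mem_singleton, Prod.mk.injEq, not_or, not_and]
      exact ⟨fun h => absurd h h12, fun h => absurd h h13⟩
  set PF : Finset (G.V × ℕ) := CF ×ˢ ({α, β} : Finset ℕ) with hPF
  have hTRIsub : TRI ⊆ PF := by
    intro p hp
    rw [hTRI] at hp
    simp only [Finset.mem_insert, Finset.mem_singleton] at hp
    rw [hPF, Finset.mem_product]
    rcases hp with rfl | rfl | rfl <;>
      simp only [hCF, Set.Finite.mem_toFinset, Finset.mem_insert, Finset.mem_singleton]
    · exact ⟨hu1, hγ1⟩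
    · exact ⟨hu2, hγ2⟩
    · exact ⟨hu3, hγ3⟩
  have hPFcard : PF.card = CF.card * 2 := by
    rw [hPF, Finset.card_product, Finset.card_insert_of_notMem (by simpa using hαβ),
      Finset.card_singleton]
  set Φ : G.E × Bool → G.V × ℕ := fun p => (if p.2 then KA p.1 else KB p.1, c p.1) with hΦ
  have hmaps : ∀ p ∈ EF ×ˢ (Finset.univ : Finset Bool), Φ p ∈ PF \ TRI := by
    rintro ⟨e, b⟩ hp
    rw [Finset.mem_product, hEF, Finset.mem_filter] at hp
    obtain ⟨⟨-, ⟨heD, hcol⟩, hex⟩, -⟩ := hp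
    have hvends : (if b then KA e else KB e) ∈ G.ends e := by
      rw [hKends e]
      cases b <;> simp [Sym2.mem_iff]
    have hvC : (if b then KA e else KB e) ∈ C := hcl e heD hcol hex _ hvends
    rw [Finset.mem_sdiff]
    constructor
    · rw [hPF, Finset.mem_product]
      refine ⟨by rw [hCF, Set.Finite.mem_toFinset]; exact hvC, ?_⟩
      simp only [Finset.mem_insert, Finset.mem_singleton]
      exact hcol
    · rw [hTRI]
      simp only [Finset.mem_insert, Finset.mem_singleton, Prod.mk.injEq, not_or, not_and,
        hΦ]
      refine ⟨fun hv hγ => ?_, fun hv hγ => ?_, fun hv hγ => ?_⟩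
      · exact hm1.2 e (Set.mem_compl_singleton_iff.2 heD) (hv ▸ hvends) (hγ ▸ rfl)
      · exact hm2.2 e (Set.mem_compl_singleton_iff.2 heD) (hv ▸ hvends) (hγ ▸ rfl)
      · exact hm3.2 e (Set.mem_compl_singleton_iff.2 heD) (hv ▸ hvends) (hγ ▸ rfl)
  have hinjb : Set.InjOn Φ ↑(EF ×ˢ (Finset.univ : Finset Bool)) := by
    rintro ⟨e, b⟩ hp ⟨e', b'⟩ hp' heq
    simp only [Finset.coe_product, Set.mem_prod, Finset.mem_coe, hEF, Finset.mem_filter]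
      at hp hp'
    obtain ⟨⟨-, ⟨heD, hcol⟩, hex⟩, -⟩ := hp
    obtain ⟨⟨-, ⟨heD', hcol'⟩, hex'⟩, -⟩ := hp'
    rw [hΦ, Prod.mk.injEq] at heq
    obtain ⟨hveq, hceq⟩ := heq
    by_cases hee : e = e'
    · subst hee
      by_cases hbb : b = b'
      · rw [hbb]
      · exfalso
        rcases Bool.eq_false_or_eq_true b with rfl | rfl <;>
          rcases Bool.eq_false_or_eq_true b' with rfl | rfl
        · exact hbb rfl
        · simp only [Bool.false_eq_true, if_false, if_true] at hveq
          exact hKAB e hveq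
        · simp only [Bool.false_eq_true, if_false, if_true] at hveq
          exact hKAB e hveq.symm
        · exact hbb rfl
    · exfalso
      have hvem : (if b then KA e else KB e) ∈ G.ends e := by
        rw [hKends e]; cases b <;> simp [Sym2.mem_iff]
      have hvem' : (if b' then KA e' else KB e') ∈ G.ends e' := by
        rw [hKends e']; cases b' <;> simp [Sym2.mem_iff]
      rw [← hveq] at hvem'
      exact hc.2 e (Set.mem_compl_singleton_iff.2 heD) e' (Set.mem_compl_singleton_iff.2 heD')
        hee ⟨_, hvem, hvem'⟩ hceq
  have hstepb := Finset.card_le_card_of_injOn Φ hmaps hinjb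
  rw [Finset.card_product] at hstepb
  have hsd := Finset.card_sdiff_add_card_eq_card hTRIsub
  have hbool : (Finset.univ : Finset Bool).card = 2 := by simp
  rw [hbool] at hstepb
  omega

end Count

section Elem

variable {G : Multigraph} {k : ℕ} {x y : G.V} {e₀ : G.E}

lemma missing_x_nonempty (hdx : G.maxDegree + 1 ≤ k) (hx0 : x ∈ G.ends e₀) (c : G.E → ℕ) :
    (G.missingOn k {e₀}ᶜ c x).Nonempty := by
  have h1 := missing_card G k {e₀}ᶜ c x
  have h2 : {e : G.E | e ∈ ({e₀}ᶜ : Set G.E) ∧ x ∈ G.ends e}.ncard ≤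
      {e : G.E | x ∈ G.ends e}.ncard - 1 := by
    have hsub : {e : G.E | e ∈ ({e₀}ᶜ : Set G.E) ∧ x ∈ G.ends e} ⊆
        {e : G.E | x ∈ G.ends e} \ {e₀} := by
      rintro e ⟨he, hxe⟩
      exact ⟨hxe, he⟩
    calc {e : G.E | e ∈ ({e₀}ᶜ : Set G.E) ∧ x ∈ G.ends e}.ncard
        ≤ ({e : G.E | x ∈ G.ends e} \ {e₀}).ncard := Set.ncard_le_ncard hsub (Set.toFinite _)
      _ = {e : G.E | x ∈ G.ends e}.ncard - 1 := Set.ncard_diff_singleton_of_mem hx0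
  have h3 : {e : G.E | x ∈ G.ends e}.ncard ≤ G.maxDegree := degree_le_maxDegree G x
  have hfin : (G.missingOn k {e₀}ᶜ c x).Finite :=
    (Set.finite_Icc 1 k).subset (fun i hi => hi.1)
  rw [← Set.ncard_pos hfin]
  omega

/-- After swapping a chain component avoiding `x`, a suitable truncation of the fan is
still a multi-fan, and `β` becomes missing at both `x` and a fan vertex: contradiction. -/
lemma swap_finish (hχ : G.chromIndex = k + 1)
    (c : G.E → ℕ) (hc : G.IsProperColoringOn k {e₀}ᶜ c)
    (F : MultiFan G k {e₀}ᶜ c x e₀ y) (α β : ℕ)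
    (hαβ : α ≠ β) (hαI : α ∈ Set.Icc 1 k) (hβI : β ∈ Set.Icc 1 k) (root : G.V)
    (hβx : β ∈ G.missingOn k {e₀}ᶜ c x)
    (hxroot : ¬ (G.simpleOn {e | e ≠ e₀ ∧ (c e = α ∨ c e = β)}).Reachable root x)
    (m : ℕ) (hm : m ≤ F.p)
    (hαwit : ∀ i' : Fin (F.p + 1), i' ≠ 0 → i'.val ≤ m → c (F.edge i') = α →
      ∃ l : Fin (F.p + 1), l.val < i'.val ∧ α ∈ G.missingOn k {e₀}ᶜ c (F.vx l) ∧
        ¬ (G.simpleOn {e | e ≠ e₀ ∧ (c e = α ∨ c e = β)}).Reachable root (F.vx l))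
    (t : Fin (F.p + 1)) (htm : t.val ≤ m)
    (hroott : (G.simpleOn {e | e ≠ e₀ ∧ (c e = α ∨ c e = β)}).Reachable root (F.vx t))
    (hαt : α ∈ G.missingOn k {e₀}ᶜ c (F.vx t)) : False := by
  set C : Set G.V :=
    {v | (G.simpleOn {e | e ≠ e₀ ∧ (c e = α ∨ c e = β)}).Reachable root v} with hCdef
  have hcl : SwClosed (G := G) (e₀ := e₀) (c := c) (α := α) (β := β) (C := C) :=
    reach_closed e₀ c α β root
  set c' := swapCol e₀ c α β C with hc'def
  have hxC : x ∉ C := hxroot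
  have htC : F.vx t ∈ C := hroott
  have hc' : G.IsProperColoringOn k {e₀}ᶜ c' := swapCol_proper hc hαI hβI hαβ hcl
  have hcond : ∀ i' : Fin (F.p + 1), i' ≠ 0 → i'.val ≤ m →
      ∃ l : Fin (F.p + 1), l.val < i'.val ∧ c' (F.edge i') ∈ G.missingOn k {e₀}ᶜ c' (F.vx l) := by
    intro i' hi0 hile
    have hce : c' (F.edge i') = c (F.edge i') :=
      swapCol_eq_of_not_mem hcl (x_mem_ends F i') hxC
    by_cases hcα : c (F.edge i') = α
    · obtain ⟨l, hl, hml, hnr⟩ := hαwit i' hi0 hile hcα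
      refine ⟨l, hl, ?_⟩
      rw [hce, hcα]
      exact (swapCol_missing_not_mem hcl hnr α).2 hml
    · have hcβ : c (F.edge i') ≠ β :=
        hβx.2 (F.edge i') (Set.mem_compl_singleton_iff.2 (edge_mem_D F hi0)) (x_mem_ends F i')
      obtain ⟨l, hl, hml⟩ := F.fan_cond i' hi0
      refine ⟨l, Fin.lt_def.1 hl, ?_⟩
      rw [hce]
      exact (swapCol_missing_gamma hcα hcβ).2 hml
  refine stepB hχ t.val c' hc' (retract F m hm c' hcond)
    ⟨t.val, by simp only [retract_p]; omega⟩ rfl β ?_ ?_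
  · exact (swapCol_missing_not_mem hcl hxC β).2 hβx
  · erw [retract_vx]
    have h9 : (Fin.castLE (by omega) (⟨t.val, by omega⟩ : Fin (m + 1))) = t := Fin.ext rfl
    erw [h9]
    exact (swapCol_missing_beta hαβ hαI hβI htC).2 hαt

/-- **Elementarity.** Distinct vertices of a multi-fan have disjoint missing color sets. -/
lemma elem (hχ : G.chromIndex = k + 1) (hdx : G.maxDegree + 1 ≤ k) :
    ∀ (n : ℕ) (c : G.E → ℕ), G.IsProperColoringOn k {e₀}ᶜ c →
      ∀ (F : MultiFan G k {e₀}ᶜ c x e₀ y), F.p = n →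
      ∀ (i j : Fin (F.p + 1)) (α : ℕ), F.vx i ≠ F.vx j →
      α ∈ G.missingOn k {e₀}ᶜ c (F.vx i) → α ∈ G.missingOn k {e₀}ᶜ c (F.vx j) → False := by
  intro n
  induction n using Nat.strong_induction_on with
  | _ n IH =>
  intro c hc F hFp i₀ j₀ α₀ hne₀ hi₀ hj₀
  have main : ∀ (i j : Fin (F.p + 1)) (α : ℕ), i < j → F.vx i ≠ F.vx j →
      α ∈ G.missingOn k {e₀}ᶜ c (F.vx i) → α ∈ G.missingOn k {e₀}ᶜ c (F.vx j) → False := by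
    intro i j α hij hne hi hj
    by_cases hjp : j.val < F.p
    · -- truncate at j and use the induction hypothesis
      have hcond : ∀ i' : Fin (F.p + 1), i' ≠ 0 → i'.val ≤ j.val →
          ∃ l : Fin (F.p + 1), l.val < i'.val ∧
            c (F.edge i') ∈ G.missingOn k {e₀}ᶜ c (F.vx l) := by
        intro i' hi0 _
        obtain ⟨l, hl, hml⟩ := F.fan_cond i' hi0
        exact ⟨l, Fin.lt_def.1 hl, hml⟩
      refine IH j.val (by omega) c hc (retract F j.val (by omega) c hcond) rfl
        ⟨i.val, by simp only [retract_p]; omega⟩ ⟨j.val, by simp only [retract_p]; omega⟩ α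
        ?_ ?_ ?_ <;> erw [retract_vx]
      · have h1 : (Fin.castLE (by omega) (⟨i.val, by omega⟩ : Fin (j.val + 1))) = i :=
          Fin.ext rfl
        erw [h1]
        have h2 : (Fin.castLE (by omega) (⟨j.val, by omega⟩ : Fin (j.val + 1))) = j :=
          Fin.ext rfl
        exact hne
      · have h1 : (Fin.castLE (by omega) (⟨i.val, by omega⟩ : Fin (j.val + 1))) = i :=
          Fin.ext rfl
        erw [h1]; exact hi
      · have h2 : (Fin.castLE (by omega) (⟨j.val, by omega⟩ : Fin (j.val + 1))) = j :=
          Fin.ext rfl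
        erw [h2]; exact hj
    · -- j is the last index
      have hjval : j.val = F.p := by have := j.isLt; omega
      have hilt : i.val < F.p := by have : i.val < j.val := hij; omega
      have hp1 : 1 ≤ F.p := by omega
      -- all earlier fan vertices missing α coincide with vx i
      have Hfresh : ∀ l : Fin (F.p + 1), l.val < F.p →
          α ∈ G.missingOn k {e₀}ᶜ c (F.vx l) → F.vx l = F.vx i := by
        intro l hl hml
        by_contra hcon
        have hcond : ∀ i' : Fin (F.p + 1), i' ≠ 0 → i'.val ≤ F.p - 1 →
            ∃ l' : Fin (F.p + 1), l'.val < i'.val ∧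
              c (F.edge i') ∈ G.missingOn k {e₀}ᶜ c (F.vx l') := by
          intro i' hi0 _
          obtain ⟨l', hl', hml'⟩ := F.fan_cond i' hi0
          exact ⟨l', Fin.lt_def.1 hl', hml'⟩
        refine IH (F.p - 1) (by omega) c hc (retract F (F.p - 1) (by omega) c hcond) rfl
          ⟨l.val, by simp only [retract_p]; omega⟩ ⟨i.val, by simp only [retract_p]; omega⟩ α
          ?_ ?_ ?_ <;> erw [retract_vx]
        · have h1 : (Fin.castLE (by omega) (⟨l.val, by omega⟩ : Fin (F.p - 1 + 1))) = l :=
            Fin.ext rfl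
          erw [h1]
          have h2 : (Fin.castLE (by omega) (⟨i.val, by omega⟩ : Fin (F.p - 1 + 1))) = i :=
            Fin.ext rfl
          exact hcon
        · have h1 : (Fin.castLE (by omega) (⟨l.val, by omega⟩ : Fin (F.p - 1 + 1))) = l :=
            Fin.ext rfl
          erw [h1]; exact hml
        · have h2 : (Fin.castLE (by omega) (⟨i.val, by omega⟩ : Fin (F.p - 1 + 1))) = i :=
            Fin.ext rfl
          erw [h2]; exact hi
      -- a color missing at x
      have hx0 : x ∈ G.ends e₀ := by
        have := x_mem_ends F 0
        rwa [F.edge_zero] at this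
      obtain ⟨β, hβ⟩ := missing_x_nonempty hdx hx0 c
      have hβα : β ≠ α := fun h => stepB hχ i.val c hc F i rfl α (h ▸ hβ) hi
      have hαβ : α ≠ β := hβα.symm
      have hαI : α ∈ Set.Icc 1 k := hi.1
      have hβI : β ∈ Set.Icc 1 k := hβ.1
      have huniqα : ∀ m m' : Fin (F.p + 1), m ≠ 0 → m' ≠ 0 →
          c (F.edge m) = α → c (F.edge m') = α → m = m' := by
        intro m m' hm0 hm'0 hcm hcm'
        by_contra hmm
        have hedge : F.edge m ≠ F.edge m' := fun h => hmm (F.edge_inj h)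
        exact hc.2 (F.edge m) (Set.mem_compl_singleton_iff.2 (edge_mem_D F hm0))
          (F.edge m') (Set.mem_compl_singleton_iff.2 (edge_mem_D F hm'0)) hedge
          ⟨x, x_mem_ends F m, x_mem_ends F m'⟩ (hcm.trans hcm'.symm)
      by_cases hxt : (G.simpleOn {e | e ≠ e₀ ∧ (c e = α ∨ c e = β)}).Reachable (F.vx i) x
      · -- swap the component of vx j (which contains neither x nor vx i)
        have hnR : ¬ (G.simpleOn {e | e ≠ e₀ ∧ (c e = α ∨ c e = β)}).Reachable
            (F.vx i) (F.vx j) := by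
          intro hr
          exact count_three k e₀ c hc α β hαβ (F.vx i) x (F.vx j) α β α (Or.inl rfl)
            (Or.inr rfl) (Or.inl rfl) hi hβ hj (vx_ne_x F i) hne (vx_ne_x F j).symm.symm.symm
            hxt hr
        have hxp : ¬ (G.simpleOn {e | e ≠ e₀ ∧ (c e = α ∨ c e = β)}).Reachable (F.vx j) x :=
          fun h => hnR (hxt.trans h.symm).symm.symm
        have hit : ¬ (G.simpleOn {e | e ≠ e₀ ∧ (c e = α ∨ c e = β)}).Reachable
            (F.vx j) (F.vx i) := fun h => hnR h.symm
        refine swap_finish hχ c hc F α β hαβ hαI hβI (F.vx j) hβ hxp F.p (le_refl _)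
          ?_ j (by omega) (SimpleGraph.Reachable.refl _) hj
        intro i' hi0 _ hcα
        obtain ⟨l, hl, hml⟩ := F.fan_cond i' hi0
        have hlval : l.val < F.p := by
          have h1 : l.val < i'.val := hl
          have := i'.isLt
          omega
        have hlv : F.vx l = F.vx i := Hfresh l hlval (hcα ▸ hml)
        exact ⟨l, Fin.lt_def.1 hl, hcα ▸ hml, by rw [hlv]; exact hit⟩
      · -- swap the component of vx i
        by_cases hαe : ∃ m : Fin (F.p + 1), m ≠ 0 ∧ c (F.edge m) = α
        · obtain ⟨m, hm0, hmα⟩ := hαe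
          obtain ⟨lm, hlm, hmlm⟩ := F.fan_cond m hm0
          have hlmval : lm.val < m.val := hlm
          have hm1 : 1 ≤ m.val := by
            by_contra h
            exact hm0 (Fin.ext (by omega))
          have hlmv : F.vx lm = F.vx i := by
            refine Hfresh lm ?_ (hmα ▸ hmlm)
            have := m.isLt; omega
          refine swap_finish hχ c hc F α β hαβ hαI hβI (F.vx i) hβ hxt (m.val - 1)
            (by have := m.isLt; omega) ?_ lm (by omega) ?_ (hmα ▸ hmlm)
          · intro i' hi0 hile hcα
            exfalso
            have : i' = m := huniqα i' m hi0 hm0 hcα hmα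
            rw [this] at hile
            omega
          · rw [hlmv]
        · push_neg at hαe
          refine swap_finish hχ c hc F α β hαβ hαI hβI (F.vx i) hβ hxt F.p (le_refl _)
            ?_ i (by omega) (SimpleGraph.Reachable.refl _) hi
          intro i' hi0 _ hcα
          exact absurd hcα (hαe i' hi0)
  rcases lt_trichotomy i₀ j₀ with h | h | h
  · exact main i₀ j₀ α₀ h hne₀ hi₀ hj₀
  · exact hne₀ (by rw [h])
  · exact main j₀ i₀ α₀ h hne₀.symm hj₀ hi₀

end Elem

section Extend

variable {G : Multigraph} {k : ℕ} {x y : G.V} {e₀ : G.E}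

/-- In a maximal multi-fan, every `D`-edge at `x` whose color is missing at a fan vertex
is itself a fan edge. -/
lemma fanedge_of_missing (c : G.E → ℕ)
    (F : MultiFan G k {e₀}ᶜ c x e₀ y) (hmax : F.IsMaximal)
    (f : G.E) (hf : f ≠ e₀) (hfx : x ∈ G.ends f) (l : Fin (F.p + 1))
    (hmem : c f ∈ G.missingOn k {e₀}ᶜ c (F.vx l)) :
    ∃ j : Fin (F.p + 1), F.edge j = f := by
  by_contra hcon
  push_neg at hcon
  obtain ⟨w, hw⟩ := Sym2.mem_iff_exists.1 hfx
  set F' : MultiFan G k {e₀}ᶜ c x e₀ y :=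
    { p := F.p + 1
      edge := Fin.snoc F.edge f
      vx := Fin.snoc F.vx w
      edge_zero := by
        rw [show (0 : Fin (F.p + 2)) = Fin.castSucc 0 by rw [Fin.castSucc_zero],
          Fin.snoc_castSucc, F.edge_zero]
      vx_zero := by
        rw [show (0 : Fin (F.p + 2)) = Fin.castSucc 0 by rw [Fin.castSucc_zero],
          Fin.snoc_castSucc, F.vx_zero]
      ends_eq := by
        intro i
        refine Fin.lastCases ?_ ?_ i
        · rw [Fin.snoc_last, Fin.snoc_last]; exact hw
        · intro i'
          rw [Fin.snoc_castSucc, Fin.snoc_castSucc]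
          exact F.ends_eq i'
      edge_inj := by
        intro a b hab
        rcases Fin.eq_castSucc_or_eq_last a with ⟨a', rfl⟩ | rfl <;>
          rcases Fin.eq_castSucc_or_eq_last b with ⟨b', rfl⟩ | rfl
        · rw [Fin.snoc_castSucc, Fin.snoc_castSucc] at hab
          exact congrArg _ (F.edge_inj hab)
        · rw [Fin.snoc_castSucc, Fin.snoc_last] at hab
          exact absurd hab (hcon a')
        · rw [Fin.snoc_last, Fin.snoc_castSucc] at hab
          exact absurd hab.symm (hcon b')
        · rfl
      fan_cond := by
        intro i hi
        revert hi
        refine Fin.lastCases ?_ ?_ i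
        · intro _
          refine ⟨Fin.castSucc l, Fin.castSucc_lt_last l, ?_⟩
          rw [Fin.snoc_last, Fin.snoc_castSucc]
          exact hmem
        · intro i' hi'
          have hi'0 : i' ≠ 0 := by
            intro h
            apply hi'
            rw [h, Fin.castSucc_zero]
          obtain ⟨l', hl', hml'⟩ := F.fan_cond i' hi'0
          refine ⟨Fin.castSucc l', ?_, ?_⟩
          · exact Fin.castSucc_lt_castSucc_iff.2 hl'
          · rw [Fin.snoc_castSucc, Fin.snoc_castSucc]
            exact hml' } with hF'
  have hsub : F.Subseq F' := by
    refine ⟨fun i => Fin.castSucc i, Fin.strictMono_castSucc, fun i => ⟨?_, ?_⟩⟩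
    · show (Fin.snoc F.edge f : Fin (F.p + 2) → G.E) _ = _
      rw [Fin.snoc_castSucc]
    · show (Fin.snoc F.vx w : Fin (F.p + 2) → G.V) _ = _
      rw [Fin.snoc_castSucc]
  have := hmax F' hsub
  simp only [hF'] at this
  omega

end Extend
end MFAux
/-- **Lemma 3.2(b).** Let `G` have maximum degree `Δ`, maximum multiplicity `μ ≥ 2`, let
`k = Δ+μ-1`, `χ'(G) = k+1`, `e ∈ E_G(x,y)` `k`-critical, `φ` a `k`-edge-coloring of `G-e`
and `F` a maximal multi-fan at `x` with respect to `e` and `φ`. If `d_G(y) = Δ` and `x` has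
exactly one `Δ`-neighbor `z'` in `G` from `V(F)∖{x,y}`, then `e_F(x,z) = e_G(x,z) = μ` for
all `z ∈ V(F)∖{x}` and `d_G(z) = Δ-1` for all `z ∈ V(F)∖{x,y,z'}`. -/
theorem maximal_multifan_unique_delta_neighbor (G : Multigraph) (k : ℕ)
    (hμ : 2 ≤ G.maxMult) (hk : k + 1 = G.maxDegree + G.maxMult)
    (hχ : G.chromIndex = k + 1)
    (x y : G.V) (e₀ : G.E) (hends : G.ends e₀ = s(x, y))
    (he : G.IsCriticalEdge k e₀)
    (φ : G.E → ℕ) (hφ : G.IsProperColoringOn k {e₀}ᶜ φ)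
    (F : Multigraph.MultiFan G k {e₀}ᶜ φ x e₀ y) (hF : F.IsMaximal)
    (hy : G.degree y = G.maxDegree)
    (z' : G.V)
    (hz' : z' ∈ F.verts ∧ z' ≠ x ∧ z' ≠ y ∧ (∃ f : G.E, G.ends f = s(x, z')) ∧
      G.degree z' = G.maxDegree)
    (huniq : ∀ z ∈ F.verts, z ≠ x → z ≠ y → (∃ f : G.E, G.ends f = s(x, z)) →
      G.degree z = G.maxDegree → z = z') :
    (∀ z ∈ F.verts, z ≠ x → F.multAt z = G.mult x z ∧ G.mult x z = G.maxMult) ∧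
    (∀ z ∈ F.verts, z ≠ x → z ≠ y → z ≠ z' → G.degree z = G.maxDegree - 1) := by
  classical
  obtain ⟨hz'F, hz'x, hz'y, -, hz'deg⟩ := hz'
  have hdx : G.maxDegree + 1 ≤ k := by omega
  have hx0 : x ∈ G.ends e₀ := by rw [hends]; exact Sym2.mem_mk_left _ _
  have hy0 : y ∈ G.ends e₀ := by rw [hends]; exact Sym2.mem_mk_right _ _
  set Δ := G.maxDegree with hΔ
  set μ := G.maxMult with hμdef
  set Z : Finset G.V := Finset.image F.vx Finset.univ with hZ
  set dD : G.V → ℕ :=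
    fun z => {e : G.E | e ∈ ({e₀}ᶜ : Set G.E) ∧ z ∈ G.ends e}.ncard with hdD
  -- basic memberships
  have hyZ : y ∈ Z := by
    rw [hZ, Finset.mem_image]
    exact ⟨0, Finset.mem_univ _, F.vx_zero⟩
  have hZx : ∀ z ∈ Z, z ≠ x := by
    intro z hz
    rw [hZ, Finset.mem_image] at hz
    obtain ⟨i, -, rfl⟩ := hz
    exact MFAux.vx_ne_x F i
  have hvertsZ : ∀ z ∈ F.verts, z ≠ x → z ∈ Z := by
    intro z hz hzx
    rcases hz with h | ⟨i, rfl⟩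
    · exact absurd h hzx
    · rw [hZ, Finset.mem_image]; exact ⟨i, Finset.mem_univ _, rfl⟩
  have hz'Z : z' ∈ Z := hvertsZ z' hz'F hz'x
  have hZverts : ∀ z ∈ Z, z ∈ F.verts := by
    intro z hz
    rw [hZ, Finset.mem_image] at hz
    obtain ⟨i, -, rfl⟩ := hz
    exact Or.inr ⟨i, rfl⟩
  -- fiber cards
  have hmultAt : ∀ z : G.V, F.multAt z =
      (Finset.univ.filter (fun j : Fin (F.p + 1) => F.vx j = z)).card := by
    intro z
    rw [Multigraph.MultiFan.multAt, Nat.card_eq_fintype_card, Fintype.card_subtype]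
  have hsum_mult : ∑ z ∈ Z, F.multAt z = F.p + 1 := by
    have h := Finset.card_eq_sum_card_fiberwise (f := F.vx) (s := Finset.univ) (t := Z)
      (fun j _ => by rw [Finset.mem_coe, hZ, Finset.mem_image]; exact ⟨j, Finset.mem_univ _, rfl⟩)
    rw [Finset.card_univ, Fintype.card_fin] at h
    calc ∑ z ∈ Z, F.multAt z
        = ∑ z ∈ Z, (Finset.univ.filter (fun j : Fin (F.p + 1) => F.vx j = z)).card :=
          Finset.sum_congr rfl (fun z _ => hmultAt z)
      _ = F.p + 1 := h.symm
  -- multAt ≤ mult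
  have hma_le : ∀ z ∈ Z, F.multAt z ≤ G.mult x z := by
    intro z hz
    rw [hmultAt z, Multigraph.mult,
      MFAux.ncard_setOf_eq_card_filter G (fun e => G.ends e = s(x, z))]
    refine Finset.card_le_card_of_injOn F.edge ?_ ?_
    · intro j hj
      rw [Finset.mem_coe, Finset.mem_filter] at hj ⊢
      refine ⟨Finset.mem_univ _, ?_⟩
      rw [F.ends_eq j, hj.2]
    · intro a _ b _ hab
      exact F.edge_inj hab
  -- missing-color sums
  have hmiss_fin : ∀ z : G.V, (G.missingOn k {e₀}ᶜ φ z).Finite :=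
    fun z => (Set.finite_Icc 1 k).subset (fun i hi => hi.1)
  have key2 : ∀ q : (Σ _ : G.V, ℕ), (∃ l : Fin (F.p + 1), F.vx l = q.1) →
      q.2 ∈ G.missingOn k {e₀}ᶜ φ q.1 →
      ∃ j : Fin (F.p + 1), j ≠ 0 ∧ φ (F.edge j) = q.2 := by
    rintro ⟨z, γ⟩ ⟨l, rfl⟩ hγ
    have hγx : γ ∉ G.missingOn k {e₀}ᶜ φ x :=
      fun h => MFAux.stepB hχ l.val φ hφ F l rfl γ h hγ
    have hpres : ¬ (∀ e ∈ ({e₀}ᶜ : Set G.E), x ∈ G.ends e → φ e ≠ γ) :=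
      fun h => hγx ⟨hγ.1, h⟩
    push_neg at hpres
    obtain ⟨f, hfD, hfx, hfγ⟩ := hpres
    obtain ⟨j, hj⟩ := MFAux.fanedge_of_missing φ F hF f (Set.mem_compl_singleton_iff.1 hfD)
      hfx l (by rw [hfγ]; exact hγ)
    have hj0 : j ≠ 0 := by
      intro h
      rw [h, F.edge_zero] at hj
      exact (Set.mem_compl_singleton_iff.1 hfD) hj.symm
    exact ⟨j, hj0, by rw [hj]; exact hfγ⟩
  choose! ψ hψ0 hψc using key2
  have hsum_missing : ∑ z ∈ Z, (G.missingOn k {e₀}ᶜ φ z).ncard ≤ F.p := by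
    have hrw : ∀ z ∈ Z, (G.missingOn k {e₀}ᶜ φ z).ncard = ((hmiss_fin z).toFinset).card :=
      fun z _ => Set.ncard_eq_toFinset_card _ (hmiss_fin z)
    rw [Finset.sum_congr rfl hrw, ← Finset.card_sigma]
    have htarget : (Finset.univ.filter (fun j : Fin (F.p + 1) => j ≠ 0)).card = F.p := by
      rw [Finset.filter_ne', Finset.card_erase_of_mem (Finset.mem_univ _), Finset.card_univ,
        Fintype.card_fin]
      omega
    rw [← htarget]
    refine Finset.card_le_card_of_injOn ψ ?_ ?_
    · rintro ⟨z, γ⟩ hq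
      rw [Finset.mem_coe, Finset.mem_sigma] at hq
      obtain ⟨hzZ, hγ⟩ := hq
      rw [Set.Finite.mem_toFinset] at hγ
      have hex : ∃ l : Fin (F.p + 1), F.vx l = z := by
        rw [hZ, Finset.mem_image] at hzZ
        obtain ⟨i, -, rfl⟩ := hzZ
        exact ⟨i, rfl⟩
      rw [Finset.mem_coe, Finset.mem_filter]
      exact ⟨Finset.mem_univ _, hψ0 ⟨z, γ⟩ hex hγ⟩
    · rintro ⟨z₁, γ₁⟩ hq₁ ⟨z₂, γ₂⟩ hq₂ heq
      simp only [Finset.coe_sigma, Set.mem_sigma_iff, Finset.mem_coe,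
        Set.Finite.mem_toFinset] at hq₁ hq₂
      obtain ⟨hz₁Z, hγ₁⟩ := hq₁
      obtain ⟨hz₂Z, hγ₂⟩ := hq₂
      have hex₁ : ∃ l : Fin (F.p + 1), F.vx l = z₁ := by
        rw [hZ, Finset.mem_image] at hz₁Z
        obtain ⟨i, -, rfl⟩ := hz₁Z
        exact ⟨i, rfl⟩
      have hex₂ : ∃ l : Fin (F.p + 1), F.vx l = z₂ := by
        rw [hZ, Finset.mem_image] at hz₂Z
        obtain ⟨i, -, rfl⟩ := hz₂Z
        exact ⟨i, rfl⟩
      have hc₁ := hψc ⟨z₁, γ₁⟩ hex₁ hγ₁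
      have hc₂ := hψc ⟨z₂, γ₂⟩ hex₂ hγ₂
      rw [heq] at hc₁
      have hγeq : γ₁ = γ₂ := hc₁.symm.trans hc₂
      have hzeq : z₁ = z₂ := by
        by_contra hne
        obtain ⟨l₁, rfl⟩ := hex₁
        obtain ⟨l₂, rfl⟩ := hex₂
        exact MFAux.elem hχ hdx F.p φ hφ F rfl l₁ l₂ γ₁ hne hγ₁ (hγeq ▸ hγ₂)
      subst hzeq
      subst hγeq
      rfl
  -- degree bookkeeping
  have hdDy : dD y + 1 = G.degree y := by
    simp only [hdD]
    rw [Multigraph.degree]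
    have hset : {e : G.E | e ∈ ({e₀}ᶜ : Set G.E) ∧ y ∈ G.ends e} =
        {e : G.E | y ∈ G.ends e} \ {e₀} := by
      ext e
      simp only [Set.mem_setOf_eq, Set.mem_diff, Set.mem_singleton_iff,
        Set.mem_compl_singleton_iff]
      tauto
    rw [hset, Set.ncard_diff_singleton_of_mem (show e₀ ∈ {e : G.E | y ∈ G.ends e} from hy0)]
    have hpos : 0 < {e : G.E | y ∈ G.ends e}.ncard :=
      (Set.ncard_pos (Set.toFinite _)).2 ⟨e₀, hy0⟩
    omega
  have hdDz : ∀ z, z ≠ x → z ≠ y → dD z = G.degree z := by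
    intro z hzx hzy
    simp only [hdD]
    rw [Multigraph.degree]
    congr 1
    ext e
    simp only [Set.mem_setOf_eq, Set.mem_compl_singleton_iff]
    constructor
    · exact fun h => h.2
    · intro h
      refine ⟨fun hcon => ?_, h⟩
      rw [hcon, hends, Sym2.mem_iff] at h
      rcases h with rfl | rfl
      · exact hzx rfl
      · exact hzy rfl
  -- the ℤ-valued sum argument
  set f : G.V → ℤ := fun z => (F.multAt z : ℤ) + (dD z : ℤ) - k with hfdef
  set g : G.V → ℤ := fun z => if z = z' then 1 else 0 with hgdef
  have hfg : ∀ z ∈ Z, f z ≤ g z := by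
    intro z hz
    have h1 : F.multAt z ≤ G.mult x z := hma_le z hz
    have h2 : G.mult x z ≤ μ := MFAux.mult_le_maxMult G x z
    have h3 : G.degree z ≤ Δ := MFAux.degree_le_maxDegree G z
    simp only [hfdef, hgdef]
    by_cases hzz' : z = z'
    · subst hzz'
      rw [if_pos rfl, hdDz z (hZx _ hz) hz'y, hz'deg]
      push_cast
      omega
    · rw [if_neg hzz']
      by_cases hzy : z = y
      · subst hzy
        have := hdDy
        push_cast
        omega
      · -- z is not a Δ-vertex
        have hzdeg : G.degree z ≠ Δ := by
          intro hcon
          refine hzz' (huniq z (hZverts z hz) (hZx z hz) hzy ?_ hcon)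
          rw [hZ, Finset.mem_image] at hz
          obtain ⟨i, -, rfl⟩ := hz
          exact ⟨F.edge i, F.ends_eq i⟩
        rw [hdDz z (hZx z hz) hzy]
        push_cast
        omega
  have hsumg : ∑ z ∈ Z, g z = 1 := by
    simp only [hgdef]
    rw [Finset.sum_ite_eq' Z z' (fun _ => (1 : ℤ)), if_pos hz'Z]
  have hsumf : (1 : ℤ) ≤ ∑ z ∈ Z, f z := by
    have h1 : ∑ z ∈ Z, ((k : ℤ) - (dD z : ℤ)) ≤
        ∑ z ∈ Z, ((G.missingOn k {e₀}ᶜ φ z).ncard : ℤ) := by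
      refine Finset.sum_le_sum ?_
      intro z _
      have := MFAux.missing_card G k {e₀}ᶜ φ z
      simp only [hdD]
      push_cast
      omega
    have h2 : ∑ z ∈ Z, ((G.missingOn k {e₀}ᶜ φ z).ncard : ℤ) ≤ (F.p : ℤ) := by
      exact_mod_cast Nat.cast_le.2 hsum_missing
    have h3 : ∑ z ∈ Z, (F.multAt z : ℤ) = (F.p : ℤ) + 1 := by
      exact_mod_cast congrArg (Nat.cast : ℕ → ℤ) hsum_mult
    have h4 : ∑ z ∈ Z, f z =
        ∑ z ∈ Z, (F.multAt z : ℤ) - ∑ z ∈ Z, ((k : ℤ) - (dD z : ℤ)) := by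
      rw [← Finset.sum_sub_distrib]
      exact Finset.sum_congr rfl (fun z _ => by simp only [hfdef]; ring)
    rw [h4, h3]
    linarith
  have hfeq : ∀ z ∈ Z, f z = g z := by
    by_contra hcon
    push_neg at hcon
    obtain ⟨z₀, hz₀, hz₀ne⟩ := hcon
    have : ∑ z ∈ Z, f z < ∑ z ∈ Z, g z :=
      Finset.sum_lt_sum hfg ⟨z₀, hz₀, lt_of_le_of_ne (hfg z₀ hz₀) hz₀ne⟩
    rw [hsumg] at this
    omega
  -- extract the conclusions
  have hconc : ∀ z ∈ Z, F.multAt z = G.mult x z ∧ G.mult x z = μ ∧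
      (z ≠ y → z ≠ z' → G.degree z = Δ - 1) := by
    intro z hz
    have h0 := hfeq z hz
    have h1 : F.multAt z ≤ G.mult x z := hma_le z hz
    have h2 : G.mult x z ≤ μ := MFAux.mult_le_maxMult G x z
    have h3 : G.degree z ≤ Δ := MFAux.degree_le_maxDegree G z
    simp only [hfdef, hgdef] at h0
    by_cases hzz' : z = z'
    · subst hzz'
      rw [if_pos rfl, hdDz z (hZx _ hz) hz'y, hz'deg] at h0
      have : F.multAt z = μ ∧ G.mult x z = μ := by
        constructor <;> omega
      exact ⟨this.1.trans this.2.symm, this.2, fun _ h => absurd rfl h⟩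
    · rw [if_neg hzz'] at h0
      by_cases hzy : z = y
      · subst hzy
        have h5 := hdDy
        rw [hy] at h5
        have h6 : (dD z : ℤ) = (Δ : ℤ) - 1 := by push_cast; omega
        rw [h6] at h0
        have : F.multAt z = μ ∧ G.mult x z = μ := by
          constructor <;> omega
        exact ⟨this.1.trans this.2.symm, this.2, fun h => absurd rfl h⟩
      · rw [hdDz z (hZx z hz) hzy] at h0
        have hzdeg : G.degree z ≠ Δ := by
          intro hcon
          refine hzz' (huniq z (hZverts z hz) (hZx z hz) hzy ?_ hcon)
          rw [hZ, Finset.mem_image] at hz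
          obtain ⟨i, -, rfl⟩ := hz
          exact ⟨F.edge i, F.ends_eq i⟩
        have : F.multAt z = μ ∧ G.mult x z = μ ∧ G.degree z = Δ - 1 := by
          refine ⟨by omega, by omega, by omega⟩
        exact ⟨this.1.trans this.2.1.symm, this.2.1, fun _ _ => this.2.2⟩
  constructor
  · intro z hz hzx
    obtain ⟨ha, hb, -⟩ := hconc z (hvertsZ z hz hzx)
    exact ⟨ha, hb⟩
  · intro z hz hzx hzy hzz'
    obtain ⟨-, -, hd⟩ := hconc z (hvertsZ z hz hzx)
    exact hd hzy hzz'
end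

section
/- Let G be a multigraph and let M and M' be two vertex-disjoint matchings of G such that every edge of M' is fully G-saturated and M' is maximal subject to this property (no fully G-saturated edge vertex-disjoint from M∪M' can be added to M'). Then χ'(G − (M ∪ M')) ≤ Δ(G) + μ(G) − 1. -/
namespace BFProof
open Multigraph

variable {G : Multigraph}

/-- Edges of `T` incident with `v`. -/
def inc (G : Multigraph) (T : Set G.E) (v : G.V) : Set G.E := {e | e ∈ T ∧ v ∈ G.ends e}

/-- Edges of `T` joining `u` and `v`. -/
def par (G : Multigraph) (T : Set G.E) (u v : G.V) : Set G.E :=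
  {e | e ∈ T ∧ G.ends e = s(u, v)}

lemma ends_eq (G : Multigraph) (e : G.E) : ∃ a b, a ≠ b ∧ G.ends e = s(a, b) := by
  obtain ⟨⟨a, b⟩, hp⟩ := Quot.exists_rep (G.ends e)
  refine ⟨a, b, ?_, hp.symm⟩
  intro hab
  apply G.loopless e
  rw [← hp, hab]
  exact Sym2.mk_isDiag_iff.2 rfl

lemma mem_other {e : G.E} {x : G.V} (hx : x ∈ G.ends e) :
    ∃ w, w ≠ x ∧ G.ends e = s(x, w) := by
  obtain ⟨w, hw⟩ := Sym2.mem_iff_exists.mp hx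
  refine ⟨w, ?_, hw⟩
  intro hwx
  apply G.loopless e
  rw [hw, hwx]
  exact Sym2.mk_isDiag_iff.2 rfl

lemma degree_le_maxDegree (G : Multigraph) (v : G.V) : G.degree v ≤ G.maxDegree :=
  le_csSup (Set.Finite.bddAbove (Set.finite_range _)) ⟨v, rfl⟩

lemma mult_le_maxMult (G : Multigraph) (u v : G.V) : G.mult u v ≤ G.maxMult := by
  apply le_csSup
  · have h : {m | ∃ x y : G.V, G.mult x y = m} =
        Set.range (fun p : G.V × G.V => G.mult p.1 p.2) := by
      ext m
      constructor
      · rintro ⟨a, b, h⟩; exact ⟨(a, b), h⟩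
      · rintro ⟨⟨a, b⟩, h⟩; exact ⟨a, b, h⟩
    rw [h]
    exact Set.Finite.bddAbove (Set.finite_range _)
  · exact ⟨u, v, rfl⟩

lemma inc_ncard_le_degree (G : Multigraph) (T : Set G.E) (v : G.V) :
    (inc G T v).ncard ≤ G.degree v :=
  Set.ncard_le_ncard (fun _ he => he.2) (Set.toFinite _)

lemma par_ncard_le_mult (G : Multigraph) (T : Set G.E) (u v : G.V) :
    (par G T u v).ncard ≤ G.mult u v :=
  Set.ncard_le_ncard (fun _ he => he.2) (Set.toFinite _)

lemma ncard_Icc (k : ℕ) : (Set.Icc 1 k).ncard = k := by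
  rw [show (Set.Icc 1 k) = ((Finset.Icc 1 k : Finset ℕ) : Set ℕ) by simp,
    Set.ncard_coe_finset]
  simp

lemma exists_missing {k : ℕ} {D : Set G.E} (c : G.E → ℕ) {v : G.V}
    (h : (inc G D v).ncard < k) : ∃ γ, γ ∈ G.missingOn k D c v := by
  by_contra hno
  push_neg at hno
  have hsub : Set.Icc 1 k ⊆ c '' (inc G D v) := by
    intro γ hγ
    have h2 : γ ∉ G.missingOn k D c v := hno γ
    rw [missingOn, Set.mem_setOf_eq] at h2
    push_neg at h2
    obtain ⟨e, heD, hve, hce⟩ := h2 hγ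
    exact ⟨e, ⟨heD, hve⟩, hce⟩
  have h1 : k ≤ (c '' (inc G D v)).ncard := by
    calc k = (Set.Icc 1 k).ncard := (ncard_Icc k).symm
    _ ≤ _ := Set.ncard_le_ncard hsub (Set.Finite.image _ (Set.toFinite _))
  have h2 := Set.ncard_image_le (s := inc G D v) (f := c) (Set.toFinite _)
  omega

lemma missing_icc {k : ℕ} {D : Set G.E} {c : G.E → ℕ} {v : G.V} {γ : ℕ}
    (h : γ ∈ G.missingOn k D c v) : γ ∈ Set.Icc 1 k := h.1

lemma missing_ne {k : ℕ} {D : Set G.E} {c : G.E → ℕ} {v : G.V} {γ : ℕ}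
    (h : γ ∈ G.missingOn k D c v) {e : G.E} (he : e ∈ D) (hv : v ∈ G.ends e) :
    c e ≠ γ := h.2 e he hv

end BFProof
namespace BFProof
open Multigraph

/-- A (greedy) Vizing fan at `x` for the uncolored edge `e₀ ∈ E(x,y₀)`, with respect to the
coloring `c` of the edges in `T \ {e₀}`. -/
structure FanHyp (G : Multigraph) (k : ℕ) (T : Set G.E) (e₀ : G.E) (x y₀ : G.V)
    (c : G.E → ℕ) (p : ℕ) (e : ℕ → G.E) (y : ℕ → G.V) : Prop where
  e0 : e 0 = e₀
  y0 : y 0 = y₀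
  mem : ∀ i ≤ p, e i ∈ T
  ends_ : ∀ i ≤ p, G.ends (e i) = s(x, y i)
  inj : ∀ i ≤ p, ∀ j ≤ p, e i = e j → i = j
  fan : ∀ i < p, c (e (i + 1)) ∈ G.missingOn k (T \ {e₀}) c (y i)

namespace FanHyp

variable {G : Multigraph} {k : ℕ} {T : Set G.E} {e₀ : G.E} {x y₀ : G.V} {c : G.E → ℕ}
  {p : ℕ} {e : ℕ → G.E} {y : ℕ → G.V}

lemma mem_Dc (F : FanHyp G k T e₀ x y₀ c p e y) {i : ℕ} (h1 : 1 ≤ i) (h2 : i ≤ p) :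
    e i ∈ T \ {e₀} := by
  refine ⟨F.mem i h2, ?_⟩
  intro h
  simp only [Set.mem_singleton_iff] at h
  have := F.inj i h2 0 (Nat.zero_le p) (by rw [F.e0, h])
  omega

lemma x_mem (F : FanHyp G k T e₀ x y₀ c p e y) {i : ℕ} (h : i ≤ p) : x ∈ G.ends (e i) := by
  rw [F.ends_ i h]; exact Sym2.mem_iff.2 (Or.inl rfl)

lemma y_mem (F : FanHyp G k T e₀ x y₀ c p e y) {i : ℕ} (h : i ≤ p) : y i ∈ G.ends (e i) := by
  rw [F.ends_ i h]; exact Sym2.mem_iff.2 (Or.inr rfl)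

lemma xy_ne (F : FanHyp G k T e₀ x y₀ c p e y) {i : ℕ} (h : i ≤ p) : x ≠ y i := by
  intro hxy
  apply G.loopless (e i)
  rw [F.ends_ i h, ← hxy]
  exact Sym2.mk_isDiag_iff.2 rfl

lemma trunc (F : FanHyp G k T e₀ x y₀ c p e y) {q : ℕ} (hq : q ≤ p) :
    FanHyp G k T e₀ x y₀ c q e y where
  e0 := F.e0
  y0 := F.y0
  mem := fun i hi => F.mem i (hi.trans hq)
  ends_ := fun i hi => F.ends_ i (hi.trans hq)
  inj := fun i hi j hj => F.inj i (hi.trans hq) j (hj.trans hq)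
  fan := fun i hi => F.fan i (lt_of_lt_of_le hi hq)

end FanHyp

variable {G : Multigraph} {k : ℕ} {T : Set G.E} {e₀ : G.E} {x y₀ : G.V} {c : G.E → ℕ}
  {p : ℕ} {e : ℕ → G.E} {y : ℕ → G.V}

open Classical in
/-- Rotating a fan: the edge `e l` (for `l < q`) receives the color of `e (l+1)`. -/
noncomputable def rotC (c : G.E → ℕ) (e : ℕ → G.E) (q : ℕ) : G.E → ℕ := fun h =>
  if hh : ∃ l, l < q ∧ h = e l then c (e (Classical.choose hh + 1)) else c h

lemma rotC_eq_of_ne {q : ℕ} {h : G.E} (hne : ∀ l, l < q → h ≠ e l) :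
    rotC c e q h = c h := by
  classical
  rw [rotC]
  rw [dif_neg]
  rintro ⟨l, hl, hh⟩
  exact hne l hl hh

lemma rotC_eq (F : FanHyp G k T e₀ x y₀ c p e y) {q : ℕ} (hq : q ≤ p) {l : ℕ} (hl : l < q) :
    rotC c e q (e l) = c (e (l + 1)) := by
  classical
  have hex : ∃ m, m < q ∧ e l = e m := ⟨l, hl, rfl⟩
  rw [rotC, dif_pos hex]
  obtain ⟨hm1, hm2⟩ := Classical.choose_spec hex
  have : Classical.choose hex = l :=
    F.inj _ ((le_of_lt hm1).trans hq) l ((le_of_lt hl).trans hq) hm2.symm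
  rw [this]

lemma mem_Dc_of_unrot {q : ℕ} (F : FanHyp G k T e₀ x y₀ c p e y) (hq : q ≤ p) {h : G.E}
    (hh : h ∈ T \ {e q}) (hne : ∀ l, l < q → h ≠ e l) : h ∈ T \ {e₀} := by
  refine ⟨hh.1, ?_⟩
  intro hcon
  simp only [Set.mem_singleton_iff] at hcon
  rcases Nat.eq_zero_or_pos q with h0 | h0
  · exact hh.2 (by simp only [Set.mem_singleton_iff]; rw [hcon, h0, F.e0])
  · exact hne 0 h0 (by rw [F.e0, hcon])

/-- Core distinctness: a rotated edge vs another colored edge. -/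
lemma rot_ne_core (F : FanHyp G k T e₀ x y₀ c p e y) {q : ℕ} (hq : q ≤ p)
    (hc : G.IsProperColoringOn k (T \ {e₀}) c)
    {l : ℕ} (hl : l < q) {h' : G.E} (hh' : h' ∈ T \ {e q}) (hne : h' ≠ e l)
    (hshare : ∃ v, v ∈ G.ends (e l) ∧ v ∈ G.ends h') :
    rotC c e q h' ≠ c (e (l + 1)) := by
  have hl1p : l + 1 ≤ p := le_trans hl hq
  have he1Dc : e (l + 1) ∈ T \ {e₀} := F.mem_Dc (Nat.le_add_left 1 l) hl1p
  by_cases hrot : ∃ m, m < q ∧ h' = e m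
  · obtain ⟨m, hm, rfl⟩ := hrot
    rw [rotC_eq F hq hm]
    have hml : m ≠ l := fun hml => hne (by rw [hml])
    have : e (m + 1) ≠ e (l + 1) := by
      intro hcon
      exact hml (by have := F.inj (m+1) (le_trans hm hq) (l+1) hl1p hcon; omega)
    exact hc.2 _ (F.mem_Dc (Nat.le_add_left 1 m) (le_trans hm hq)) _ he1Dc this
      ⟨x, F.x_mem (le_trans hm hq), F.x_mem hl1p⟩
  · push_neg at hrot
    rw [rotC_eq_of_ne hrot]
    have hh'Dc : h' ∈ T \ {e₀} := mem_Dc_of_unrot F hq hh' hrot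
    obtain ⟨v, hv1, hv2⟩ := hshare
    rw [F.ends_ l ((le_of_lt hl).trans hq), Sym2.mem_iff] at hv1
    rcases hv1 with hvx | hvy
    · -- shared vertex is x
      have hne1 : h' ≠ e (l + 1) := by
        rintro rfl
        rcases Nat.lt_or_ge (l+1) q with hlt | hge
        · exact hrot (l+1) hlt rfl
        · have hlq : l + 1 = q := by omega
          exact hh'.2 (by simp only [Set.mem_singleton_iff]; rw [hlq])
      exact hc.2 _ hh'Dc _ he1Dc hne1 ⟨x, hvx ▸ hv2, F.x_mem hl1p⟩
    · -- shared vertex is y l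
      exact missing_ne (F.fan l (lt_of_lt_of_le hl hq)) hh'Dc (hvy ▸ hv2)

lemma rot_proper (F : FanHyp G k T e₀ x y₀ c p e y) {q : ℕ} (hq : q ≤ p)
    (hc : G.IsProperColoringOn k (T \ {e₀}) c) :
    G.IsProperColoringOn k (T \ {e q}) (rotC c e q) := by
  constructor
  · intro h hh
    by_cases hrot : ∃ m, m < q ∧ h = e m
    · obtain ⟨m, hm, rfl⟩ := hrot
      rw [rotC_eq F hq hm]
      exact hc.1 _ (F.mem_Dc (Nat.le_add_left 1 m) (le_trans hm hq))
    · push_neg at hrot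
      rw [rotC_eq_of_ne hrot]
      exact hc.1 _ (mem_Dc_of_unrot F hq hh hrot)
  · intro h hh h' hh' hne hshare
    by_cases hrot : ∃ m, m < q ∧ h = e m
    · obtain ⟨m, hm, rfl⟩ := hrot
      rw [rotC_eq F hq hm]
      exact (rot_ne_core F hq hc hm hh' (Ne.symm hne) hshare).symm
    · push_neg at hrot
      rw [rotC_eq_of_ne hrot]
      by_cases hrot' : ∃ m, m < q ∧ h' = e m
      · obtain ⟨m, hm, rfl⟩ := hrot'
        rw [rotC_eq F hq hm]
        obtain ⟨v, hv1, hv2⟩ := hshare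
        have hcore := rot_ne_core F hq hc hm hh hne ⟨v, hv2, hv1⟩
        rwa [rotC_eq_of_ne hrot] at hcore
      · push_neg at hrot'
        rw [rotC_eq_of_ne hrot']
        exact hc.2 _ (mem_Dc_of_unrot F hq hh hrot) _ (mem_Dc_of_unrot F hq hh' hrot')
          hne hshare

lemma rot_miss_x (F : FanHyp G k T e₀ x y₀ c p e y) {q : ℕ} (hq : q ≤ p) {γ : ℕ}
    (hγ : γ ∈ G.missingOn k (T \ {e₀}) c x) :
    γ ∈ G.missingOn k (T \ {e q}) (rotC c e q) x := by
  refine ⟨hγ.1, ?_⟩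
  intro h hh hx
  by_cases hrot : ∃ m, m < q ∧ h = e m
  · obtain ⟨m, hm, rfl⟩ := hrot
    rw [rotC_eq F hq hm]
    exact missing_ne hγ (F.mem_Dc (Nat.le_add_left 1 m) (le_trans hm hq))
      (F.x_mem (le_trans hm hq))
  · push_neg at hrot
    rw [rotC_eq_of_ne hrot]
    exact missing_ne hγ (mem_Dc_of_unrot F hq hh hrot) hx

lemma rot_miss_v (F : FanHyp G k T e₀ x y₀ c p e y) {q : ℕ} (hq : q ≤ p) {v : G.V}
    (hvx : v ≠ x) {γ : ℕ} (hγ : γ ∈ G.missingOn k (T \ {e₀}) c v)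
    (hfresh : ∀ l, l < q → y l = v → c (e (l + 1)) ≠ γ) :
    γ ∈ G.missingOn k (T \ {e q}) (rotC c e q) v := by
  refine ⟨hγ.1, ?_⟩
  intro h hh hv
  by_cases hrot : ∃ m, m < q ∧ h = e m
  · obtain ⟨m, hm, rfl⟩ := hrot
    rw [rotC_eq F hq hm]
    have hv' := hv
    rw [F.ends_ m ((le_of_lt hm).trans hq), Sym2.mem_iff] at hv'
    rcases hv' with hvx' | hym
    · exact absurd hvx' hvx
    · exact hfresh m hm hym.symm
  · push_neg at hrot
    rw [rotC_eq_of_ne hrot]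
    exact missing_ne hγ (mem_Dc_of_unrot F hq hh hrot) hv

/-- The "win" lemma: if the fan can be rotated up to `e q` and there is a color missing at
both `x` and `y q` (fresh at `y q` along the fan), then `T` has a proper `k`-coloring. -/
lemma win {q : ℕ} (F : FanHyp G k T e₀ x y₀ c q e y)
    (hc : G.IsProperColoringOn k (T \ {e₀}) c) {γ : ℕ}
    (hγx : γ ∈ G.missingOn k (T \ {e₀}) c x)
    (hγy : γ ∈ G.missingOn k (T \ {e₀}) c (y q))
    (hfresh : ∀ l, l < q → y l = y q → c (e (l + 1)) ≠ γ) :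
    ∃ c', G.IsProperColoringOn k T c' := by
  classical
  have hmx := rot_miss_x F (le_refl q) hγx
  have hmy := rot_miss_v F (le_refl q) (Ne.symm (F.xy_ne (le_refl q))) hγy hfresh
  have hprop := rot_proper F (le_refl q) hc
  refine ⟨fun h => if h = e q then γ else rotC c e q h, ?_, ?_⟩
  · intro h hh
    by_cases h1 : h = e q
    · simpa [h1] using hγx.1
    · simpa [h1] using hprop.1 h ⟨hh, by simpa using h1⟩
  · intro h hh h' hh' hne hshare
    by_cases h1 : h = e q <;> by_cases h2 : h' = e q
    · exact absurd (h1.trans h2.symm) hne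
    · simp only [h1, if_pos, if_neg h2, if_true]
      obtain ⟨v, hv1, hv2⟩ := hshare
      rw [h1, F.ends_ q le_rfl, Sym2.mem_iff] at hv1
      have hh'm : h' ∈ T \ {e q} := ⟨hh', by simpa using h2⟩
      rcases hv1 with hvx | hvy
      · exact (missing_ne hmx hh'm (hvx ▸ hv2)).symm
      · exact (missing_ne hmy hh'm (hvy ▸ hv2)).symm
    · simp only [h2, if_pos, if_neg h1, if_true]
      obtain ⟨v, hv1, hv2⟩ := hshare
      rw [h2, F.ends_ q le_rfl, Sym2.mem_iff] at hv2
      have hhm : h ∈ T \ {e q} := ⟨hh, by simpa using h1⟩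
      rcases hv2 with hvx | hvy
      · exact missing_ne hmx hhm (hvx ▸ hv1)
      · exact missing_ne hmy hhm (hvy ▸ hv1)
    · simp only [if_neg h1, if_neg h2]
      exact hprop.2 h ⟨hh, by simpa using h1⟩ h' ⟨hh', by simpa using h2⟩ hne hshare

end BFProof
namespace BFProof
open Multigraph

variable {G : Multigraph}

/-- The `(α,β)`-colored edges of `D`. -/
def ABset (G : Multigraph) (D : Set G.E) (c : G.E → ℕ) (α β : ℕ) : Set G.E :=
  {h | h ∈ D ∧ (c h = α ∨ c h = β)}

/-- Adjacency of `(α,β)`-colored edges: sharing a vertex. -/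
def abAdj (G : Multigraph) (D : Set G.E) (c : G.E → ℕ) (α β : ℕ) (h h' : G.E) : Prop :=
  h ∈ ABset G D c α β ∧ h' ∈ ABset G D c α β ∧ ∃ v, v ∈ G.ends h ∧ v ∈ G.ends h'

/-- The Kempe chain (connected component of `(α,β)`-colored edges) containing `g`. -/
def compSet (G : Multigraph) (D : Set G.E) (c : G.E → ℕ) (α β : ℕ) (g : G.E) : Set G.E :=
  {h | h ∈ ABset G D c α β ∧ Relation.ReflTransGen (abAdj G D c α β) g h}

open Classical in
/-- Swapping the colors `α` and `β` on the edge set `C`. -/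
noncomputable def swapC (c : G.E → ℕ) (α β : ℕ) (C : Set G.E) : G.E → ℕ := fun h =>
  if h ∈ C then (if c h = α then β else α) else c h

section Swap

variable {D : Set G.E} {c : G.E → ℕ} {α β : ℕ} {g : G.E} {k : ℕ}

lemma comp_sub_ab : compSet G D c α β g ⊆ ABset G D c α β := fun _ hh => hh.1

lemma ab_sub_D : ABset G D c α β ⊆ D := fun _ hh => hh.1

lemma comp_closed {h h' : G.E} (hh : h ∈ compSet G D c α β g) (h'ab : h' ∈ ABset G D c α β)
    (hsh : ∃ v, v ∈ G.ends h ∧ v ∈ G.ends h') : h' ∈ compSet G D c α β g :=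
  ⟨h'ab, hh.2.tail ⟨hh.1, h'ab, hsh⟩⟩

lemma self_mem_comp (hg : g ∈ ABset G D c α β) : g ∈ compSet G D c α β g :=
  ⟨hg, Relation.ReflTransGen.refl⟩

lemma swapC_of_not_mem {C : Set G.E} {h : G.E} (hh : h ∉ C) : swapC c α β C h = c h := by
  simp [swapC, hh]

lemma swapC_of_alpha {C : Set G.E} {h : G.E} (hh : h ∈ C) (hα : c h = α) :
    swapC c α β C h = β := by
  simp [swapC, hh, hα]

lemma swapC_of_beta {C : Set G.E} {h : G.E} (hαβ : α ≠ β) (hh : h ∈ C) (hβ : c h = β) :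
    swapC c α β C h = α := by
  have hne : c h ≠ α := by rw [hβ]; exact Ne.symm hαβ
  simp [swapC, hh, hne]

lemma swapC_mem_ab (hαβ : α ≠ β) {h : G.E} (hh : h ∈ compSet G D c α β g) :
    (swapC c α β (compSet G D c α β g) h = α ∧ c h = β) ∨
    (swapC c α β (compSet G D c α β g) h = β ∧ c h = α) := by
  rcases hh.1.2 with hα | hβ
  · exact Or.inr ⟨swapC_of_alpha hh hα, hα⟩
  · exact Or.inl ⟨swapC_of_beta hαβ hh hβ, hβ⟩

/-- Swapping a Kempe chain preserves properness. -/
lemma swap_proper (hc : G.IsProperColoringOn k D c) (hαβ : α ≠ β)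
    (hαI : α ∈ Set.Icc 1 k) (hβI : β ∈ Set.Icc 1 k) :
    G.IsProperColoringOn k D (swapC c α β (compSet G D c α β g)) := by
  set C := compSet G D c α β g with hC
  constructor
  · intro h hh
    by_cases hmem : h ∈ C
    · rcases swapC_mem_ab hαβ hmem with ⟨hv, _⟩ | ⟨hv, _⟩ <;> rw [hv] <;> assumption
    · rw [swapC_of_not_mem hmem]; exact hc.1 h hh
  · intro h hh h' hh' hne hsh
    by_cases hm : h ∈ C <;> by_cases hm' : h' ∈ C
    · rcases swapC_mem_ab hαβ hm with ⟨hv, hcv⟩ | ⟨hv, hcv⟩ <;>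
        rcases swapC_mem_ab hαβ hm' with ⟨hv', hcv'⟩ | ⟨hv', hcv'⟩ <;> rw [hv, hv']
      · exact absurd (hcv.trans hcv'.symm) (hc.2 h hh h' hh' hne hsh)
      · exact hαβ
      · exact Ne.symm hαβ
      · exact absurd (hcv.trans hcv'.symm) (hc.2 h hh h' hh' hne hsh)
    · -- h ∈ C, h' ∉ C : then c h' ∉ {α, β}
      have h'nab : c h' ≠ α ∧ c h' ≠ β := by
        by_contra hcon
        push_neg at hcon
        have h'ab : h' ∈ ABset G D c α β := ⟨hh', by tauto⟩
        exact hm' (comp_closed hm h'ab hsh)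
      rw [swapC_of_not_mem hm']
      rcases swapC_mem_ab hαβ hm with ⟨hv, _⟩ | ⟨hv, _⟩ <;> rw [hv]
      · exact fun hcon => h'nab.1 hcon.symm
      · exact fun hcon => h'nab.2 hcon.symm
    · have hnab : c h ≠ α ∧ c h ≠ β := by
        by_contra hcon
        push_neg at hcon
        have hab : h ∈ ABset G D c α β := ⟨hh, by tauto⟩
        obtain ⟨v, hv1, hv2⟩ := hsh
        exact hm (comp_closed hm' hab ⟨v, hv2, hv1⟩)
      rw [swapC_of_not_mem hm]
      rcases swapC_mem_ab hαβ hm' with ⟨hv, _⟩ | ⟨hv, _⟩ <;> rw [hv]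
      · exact hnab.1
      · exact hnab.2
    · rw [swapC_of_not_mem hm, swapC_of_not_mem hm']
      exact hc.2 h hh h' hh' hne hsh

/-- A vertex not touched by the chain keeps its missing colors. -/
lemma swap_miss_of_not_touched {v : G.V} (hv : ¬∃ h ∈ compSet G D c α β g, v ∈ G.ends h)
    {γ : ℕ} (hγ : γ ∈ G.missingOn k D c v) :
    γ ∈ G.missingOn k D (swapC c α β (compSet G D c α β g)) v := by
  refine ⟨hγ.1, fun h hh hvh => ?_⟩
  rw [swapC_of_not_mem (fun hm => hv ⟨h, hm, hvh⟩)]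
  exact missing_ne hγ hh hvh

/-- Colors other than `α, β` stay missing after a swap. -/
lemma swap_miss_other {v : G.V} {γ : ℕ} (hγα : γ ≠ α) (hγβ : γ ≠ β) (hαβ : α ≠ β)
    (hγ : γ ∈ G.missingOn k D c v) :
    γ ∈ G.missingOn k D (swapC c α β (compSet G D c α β g)) v := by
  refine ⟨hγ.1, fun h hh hvh => ?_⟩
  by_cases hm : h ∈ compSet G D c α β g
  · rcases swapC_mem_ab hαβ hm with ⟨hv, _⟩ | ⟨hv, _⟩ <;> rw [hv]
    · exact Ne.symm hγα
    · exact Ne.symm hγβ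
  · rw [swapC_of_not_mem hm]; exact missing_ne hγ hh hvh

/-- After swapping the chain of `g` (colored `β`, at `v` where `α` is missing),
`β` becomes missing at `v`. -/
lemma swap_miss_beta (hc : G.IsProperColoringOn k D c) (hαβ : α ≠ β) {v : G.V}
    (hαv : α ∈ G.missingOn k D c v) (hgC : g ∈ compSet G D c α β g) (hvg : v ∈ G.ends g)
    (hcg : c g = β) (hβI : β ∈ Set.Icc 1 k) :
    β ∈ G.missingOn k D (swapC c α β (compSet G D c α β g)) v := by
  refine ⟨hβI, fun h hh hvh => ?_⟩
  by_cases hm : h ∈ compSet G D c α β g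
  · rcases swapC_mem_ab hαβ hm with ⟨hv, hcv⟩ | ⟨hv, hcv⟩
    · rw [hv]; exact hαβ
    · exact absurd hcv (missing_ne hαv hh hvh)
  · rw [swapC_of_not_mem hm]
    intro hcon
    by_cases hhg : h = g
    · exact hm (hhg ▸ hgC)
    · exact hc.2 h hh g (ab_sub_D hgC.1) hhg ⟨v, hvh, hvg⟩ (hcon.trans hcg.symm)

/-- If the chain touches `v` and `β` was missing at `v`, then `α` is missing after the swap. -/
lemma swap_miss_alpha (hαβ : α ≠ β) {v : G.V}
    (hin : ∃ h ∈ compSet G D c α β g, v ∈ G.ends h)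
    (hβv : β ∈ G.missingOn k D c v) (hαI : α ∈ Set.Icc 1 k) :
    α ∈ G.missingOn k D (swapC c α β (compSet G D c α β g)) v := by
  refine ⟨hαI, fun h hh hvh => ?_⟩
  by_cases hm : h ∈ compSet G D c α β g
  · rcases swapC_mem_ab hαβ hm with ⟨hv, hcv⟩ | ⟨hv, hcv⟩
    · exact absurd hcv (missing_ne hβv hh hvh)
    · rw [hv]; exact Ne.symm hαβ
  · rw [swapC_of_not_mem hm]
    intro hcon
    obtain ⟨h₀, hh₀, hvh₀⟩ := hin
    have hab : h ∈ ABset G D c α β := ⟨hh, Or.inl hcon⟩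
    exact hm (comp_closed hh₀ hab ⟨v, hvh₀, hvh⟩)

end Swap

end BFProof
namespace BFProof
open Multigraph

section Chains

variable {α : Type*} {r r' : α → α → Prop} {p : α → Prop}

lemma chain_prefix : ∀ (l : List α) (g : α), List.Chain r g l → ∀ i (hi : i < l.length),
    ∃ lp : List α, lp.length = i + 1 ∧ List.Chain r g lp ∧
      (g :: lp).getLast (List.cons_ne_nil _ _) = l.get ⟨i, hi⟩ := by
  intro l
  induction l with
  | nil => intro g _ i hi; simp at hi
  | cons b t ih =>
    intro g hchain i hi
    rw [List.Chain, List.isChain_cons_cons] at hchain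
    cases i with
    | zero =>
      refine ⟨[b], rfl, List.chain_cons.mpr ⟨hchain.1, List.Chain.nil⟩, by simp⟩
    | succ i =>
      have hi' : i < t.length := by simpa using hi
      obtain ⟨lp, hlen, hch, hlast⟩ := ih b hchain.2 i hi'
      refine ⟨b :: lp, by simp [hlen], List.chain_cons.mpr ⟨hchain.1, hch⟩, ?_⟩
      have hne : b :: lp ≠ [] := List.cons_ne_nil _ _
      rw [List.getLast_cons hne]
      exact hlast

lemma chain_last_rel : ∀ (l : List α) (g : α), List.Chain r g l → (hl : l ≠ []) →
    ∃ u, (u = g ∨ u ∈ l.dropLast) ∧ r u (l.getLast hl) := by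
  intro l
  induction l with
  | nil => intro g _ hl; exact absurd rfl hl
  | cons b t ih =>
    intro g hchain _
    rw [List.Chain, List.isChain_cons_cons] at hchain
    cases t with
    | nil => exact ⟨g, Or.inl rfl, by simpa using hchain.1⟩
    | cons c t' =>
      obtain ⟨u, hu, hr⟩ := ih b hchain.2 (List.cons_ne_nil _ _)
      have hlast : (b :: c :: t').getLast (List.cons_ne_nil _ _) =
          (c :: t').getLast (List.cons_ne_nil _ _) := List.getLast_cons _
      rw [hlast]
      refine ⟨u, ?_, hr⟩
      rcases hu with rfl | hu
      · exact Or.inr (by simp)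
      · exact Or.inr (by simp [hu])

lemma chain_restrict (himp : ∀ a b, r a b → p a → p b → r' a b) :
    ∀ (l : List α) (g : α), List.Chain r g l → p g → (∀ b ∈ l, p b) →
      List.Chain r' g l := by
  intro l
  induction l with
  | nil => intro g _ _ _; exact List.Chain.nil
  | cons b t ih =>
    intro g hchain hg hall
    rw [List.Chain, List.isChain_cons_cons] at hchain ⊢
    exact ⟨himp _ _ hchain.1 hg (hall b (by simp)),
      ih b hchain.2 (hall b (by simp)) (fun b' hb' => hall b' (by simp [hb']))⟩

lemma chain_all_snd (hr : ∀ a b, r a b → p b) : ∀ (l : List α) (g : α),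
    List.Chain r g l → ∀ b ∈ l, p b := by
  intro l
  induction l with
  | nil => intro g _ b hb; simp at hb
  | cons c t ih =>
    intro g hchain b hb
    rw [List.Chain, List.isChain_cons_cons] at hchain
    rcases List.mem_cons.mp hb with rfl | hb'
    · exact hr _ _ hchain.1
    · exact ih c hchain.2 b hb'

end Chains

variable {G : Multigraph}

/-- Two edges of `C` sharing a vertex. -/
def shareIn (G : Multigraph) (C : Set G.E) (a b : G.E) : Prop :=
  a ∈ C ∧ b ∈ C ∧ ∃ v, v ∈ G.ends a ∧ v ∈ G.ends b

/-- An edge-connected finite edge set on `m` edges spans at most `m + 1` vertices. -/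
lemma conn_card (G : Multigraph) : ∀ (n : ℕ) (C : Set G.E) (g : G.E), C.ncard ≤ n → g ∈ C →
    (∀ h ∈ C, Relation.ReflTransGen (shareIn G C) g h) →
    {v | ∃ h ∈ C, v ∈ G.ends h}.ncard ≤ C.ncard + 1 := by
  classical
  intro n
  induction n with
  | zero =>
    intro C g hle hg _
    rw [Nat.le_zero, Set.ncard_eq_zero (Set.toFinite C)] at hle
    exact absurd (hle ▸ hg) (Set.notMem_empty g)
  | succ n ih =>
    intro C g hle hg hconn
    by_cases hall : ∀ h ∈ C, h = g
    · obtain ⟨a, b, hab, hends⟩ := ends_eq G g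
      have hV : {v | ∃ h ∈ C, v ∈ G.ends h} ⊆ {a, b} := by
        rintro v ⟨h, hh, hv⟩
        rw [hall h hh, hends, Sym2.mem_iff] at hv
        simpa using hv
      have h2 : {v | ∃ h ∈ C, v ∈ G.ends h}.ncard ≤ 2 := by
        refine le_trans (Set.ncard_le_ncard hV (Set.toFinite _)) ?_
        refine le_trans (Set.ncard_insert_le a {b}) (by simp)
      have h1 : 0 < C.ncard := (Set.ncard_pos (Set.toFinite C)).2 ⟨g, hg⟩
      omega
    · push_neg at hall
      obtain ⟨h₀, hh₀, hh₀g⟩ := hall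
      set P : G.E → ℕ → Prop := fun h m => ∃ l : List G.E, l.length = m ∧
        List.Chain (shareIn G C) g l ∧ (g :: l).getLast (List.cons_ne_nil _ _) = h with hPdef
      have hex : ∀ h ∈ C, ∃ m, P h m := by
        intro h hh
        obtain ⟨l, hch, hlast⟩ := List.exists_isChain_cons_of_relationReflTransGen (hconn h hh)
        exact ⟨l.length, l, rfl, hch, hlast⟩
      set dist : G.E → ℕ := fun h => if hh : ∃ m, P h m then Nat.find hh else 0 with hdist
      have hdist_spec : ∀ h, h ∈ C → P h (dist h) := by
        intro h hh
        have hh' := hex h hh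
        simp only [hdist, dif_pos hh']
        exact Nat.find_spec hh'
      have hdist_min : ∀ h m, P h m → dist h ≤ m := by
        intro h m hPm
        have hh' : ∃ m, P h m := ⟨m, hPm⟩
        simp only [hdist, dif_pos hh']
        exact Nat.find_min' hh' hPm
      have hdistg : dist g = 0 := by
        have : P g 0 := ⟨[], rfl, List.Chain.nil, rfl⟩
        exact Nat.le_zero.1 (hdist_min g 0 this)
      -- choose an edge h* of maximal distance
      obtain ⟨hst, hstC, hstmax⟩ := Set.exists_max_image C dist (Set.toFinite C) ⟨g, hg⟩
      have hd0 : dist h₀ ≠ 0 := by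
        intro h0
        obtain ⟨l, hlen, hch, hlast⟩ := hdist_spec h₀ hh₀
        rw [h0, List.length_eq_zero_iff] at hlen
        subst hlen
        exact hh₀g hlast.symm
      have hdst1 : 1 ≤ dist hst := le_trans (Nat.one_le_iff_ne_zero.2 hd0) (hstmax h₀ hh₀)
      have hstg : hst ≠ g := fun hcon => by rw [hcon, hdistg] at hdst1; omega
      -- interior elements of minimal chains are not h*
      have havoid : ∀ h, h ∈ C → ∀ l (hlen : l.length = dist h),
          List.Chain (shareIn G C) g l →
          ((g :: l).getLast (List.cons_ne_nil _ _) = h) →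
          ∀ i (hi : i < l.length), i + 1 < l.length ∨ h ≠ hst → l.get ⟨i, hi⟩ ≠ hst := by
        intro h hh l hlen hch hlast i hi hcase hcon
        have hP : P hst (i + 1) := by
          obtain ⟨lp, h1, h2, h3⟩ := chain_prefix l g hch i hi
          exact ⟨lp, h1, h2, by rw [h3, hcon]⟩
        have hle' := hdist_min hst (i + 1) hP
        have hlne : l ≠ [] := by
          intro hcon'; subst hcon'; simp at hi
        have hgetlast : l.get ⟨l.length - 1, by omega⟩ = h :=
          ((List.getLast_eq_getElem hlne).symm).trans
            (((List.getLast_cons hlne).symm).trans hlast)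
        rcases hcase with hlt | hne
        · -- i+1 < length: dist h* ≤ i+1 < length = dist h ≤ dist h*
          have := hstmax h hh
          omega
        · -- h ≠ h*: then i < length - 1 since last elt is h
          have hine : i ≠ l.length - 1 := by
            intro hcon'
            have hfin : (⟨i, hi⟩ : Fin l.length) = ⟨l.length - 1, by omega⟩ :=
              Fin.ext hcon'
            exact hne ((hgetlast.symm.trans (congrArg l.get hfin.symm)).trans hcon)
          have := hstmax h hh
          omega
      -- C minus h* is still connected
      set C' := C \ {hst} with hC'
      have hgC' : g ∈ C' := ⟨hg, by simpa using hstg.symm⟩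
      have hconn' : ∀ h ∈ C', Relation.ReflTransGen (shareIn G C') g h := by
        intro h hh
        obtain ⟨l, hlen, hch, hlast⟩ := hdist_spec h hh.1
        have hnotin : ∀ b ∈ l, b ≠ hst := by
          intro b hb
          obtain ⟨i, hib⟩ := List.mem_iff_get.mp hb
          have := havoid h hh.1 l hlen hch hlast i i.isLt
            (Or.inr (by simpa using hh.2))
          rw [hib] at this
          exact this
        have hch' : List.Chain (shareIn G C') g l := by
          refine chain_restrict (p := fun b => b ∈ C') ?_ l g hch hgC' ?_
          · rintro a b ⟨haC, hbC, hv⟩ ha hb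
            exact ⟨ha, hb, hv⟩
          · intro b hb
            have hbC : b ∈ C :=
              chain_all_snd (fun a b hab => hab.2.1) l g hch b hb
            exact ⟨hbC, by simpa using hnotin b hb⟩
        exact List.relationReflTransGen_of_exists_isChain_cons l hch' hlast
      -- h* shares a vertex with C'
      obtain ⟨l, hlen, hch, hlast⟩ := hdist_spec hst hstC
      have hlne : l ≠ [] := by
        intro hcon; rw [hcon] at hlen; simp at hlen; omega
      obtain ⟨u, hu, hru⟩ := chain_last_rel l g hch hlne
      have hlastl : l.getLast hlne = hst := by
        rw [← hlast, List.getLast_cons hlne]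
      rw [hlastl] at hru
      have huhst : u ≠ hst := by
        rcases hu with rfl | hu
        · exact hstg.symm
        · intro hcon
          obtain ⟨j, hjb⟩ := List.mem_iff_get.mp hu
          have hjlt : (j : ℕ) < l.length - 1 := by
            have := j.isLt
            simpa [List.length_dropLast] using this
          have hget : l.get ⟨(j : ℕ), by omega⟩ = u := by
            rw [← hjb]
            simp [List.getElem_dropLast]
          exact havoid hst hstC l hlen hch hlast (j : ℕ) (by omega)
            (Or.inl (by omega)) (hget.trans hcon)
      have huC' : u ∈ C' := ⟨hru.1, by simpa using huhst⟩
      obtain ⟨v', hv'u, hv'h⟩ := hru.2.2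
      obtain ⟨w, hw⟩ := Sym2.mem_iff_exists.mp hv'h
      -- vertex sets
      have hsub : {v | ∃ h ∈ C, v ∈ G.ends h} ⊆
          insert w {v | ∃ h ∈ C', v ∈ G.ends h} := by
        rintro v ⟨h, hh, hv⟩
        by_cases hhst : h = hst
        · subst hhst
          rw [hw, Sym2.mem_iff] at hv
          rcases hv with rfl | rfl
          · exact Set.mem_insert_of_mem _ ⟨u, huC', hv'u⟩
          · exact Set.mem_insert _ _
        · exact Set.mem_insert_of_mem _ ⟨h, ⟨hh, by simpa using hhst⟩, hv⟩
      have hcard' : C'.ncard + 1 = C.ncard := Set.ncard_diff_singleton_add_one hstC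
        (Set.toFinite C)
      have hC'le : C'.ncard ≤ n := by omega
      have hih := ih C' g hC'le hgC' hconn'
      calc {v | ∃ h ∈ C, v ∈ G.ends h}.ncard
          ≤ (insert w {v | ∃ h ∈ C', v ∈ G.ends h}).ncard :=
            Set.ncard_le_ncard hsub (Set.toFinite _)
        _ ≤ {v | ∃ h ∈ C', v ∈ G.ends h}.ncard + 1 := Set.ncard_insert_le _ _
        _ ≤ C'.ncard + 1 + 1 := by omega
        _ = C.ncard + 1 := by omega

end BFProof
namespace BFProof
open Multigraph

variable {G : Multigraph} {k : ℕ} {D : Set G.E} {c : G.E → ℕ} {α β : ℕ} {g : G.E}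

lemma comp_conn_aux (h : G.E) (hr : Relation.ReflTransGen (abAdj G D c α β) g h) :
    h ∈ ABset G D c α β →
    Relation.ReflTransGen (shareIn G (compSet G D c α β g)) g h := by
  induction hr with
  | refl => intro _; exact Relation.ReflTransGen.refl
  | @tail b u hgb hbu ih =>
    intro _
    have hbcomp : b ∈ compSet G D c α β g := ⟨hbu.1, hgb⟩
    have hucomp : u ∈ compSet G D c α β g := ⟨hbu.2.1, hgb.tail hbu⟩
    exact (ih hbu.1).tail ⟨hbcomp, hucomp, hbu.2.2⟩

lemma comp_conn (h : G.E) (hh : h ∈ compSet G D c α β g) :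
    Relation.ReflTransGen (shareIn G (compSet G D c α β g)) g h :=
  comp_conn_aux h hh.2 hh.1

lemma comp_deg_le_two (hc : G.IsProperColoringOn k D c) (v : G.V) :
    {h | h ∈ compSet G D c α β g ∧ v ∈ G.ends h}.ncard ≤ 2 := by
  set s := {h | h ∈ compSet G D c α β g ∧ v ∈ G.ends h} with hs
  have hinj : Set.InjOn c s := by
    intro h1 h1s h2 h2s hcc
    by_contra hne
    exact hc.2 h1 (ab_sub_D h1s.1.1) h2 (ab_sub_D h2s.1.1) hne ⟨v, h1s.2, h2s.2⟩ hcc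
  have himg : c '' s ⊆ {α, β} := by
    rintro γ ⟨h, hhs, rfl⟩
    rcases hhs.1.1.2 with h1 | h1 <;> simp [h1]
  calc s.ncard = (c '' s).ncard := (Set.ncard_image_of_injOn hinj).symm
    _ ≤ ({α, β} : Set ℕ).ncard := Set.ncard_le_ncard himg (Set.toFinite _)
    _ ≤ 2 := le_trans (Set.ncard_insert_le _ _) (by simp)

lemma comp_deg_le_one (hc : G.IsProperColoringOn k D c) (v : G.V) (γ : ℕ)
    (hall : ∀ h, h ∈ compSet G D c α β g → v ∈ G.ends h → c h = γ) :
    {h | h ∈ compSet G D c α β g ∧ v ∈ G.ends h}.ncard ≤ 1 := by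
  rw [Set.ncard_le_one (Set.toFinite _)]
  intro h1 h1s h2 h2s
  by_contra hne
  exact hc.2 h1 (ab_sub_D h1s.1.1) h2 (ab_sub_D h2s.1.1) hne ⟨v, h1s.2, h2s.2⟩
    ((hall h1 h1s.1 h1s.2).trans (hall h2 h2s.1 h2s.2).symm)

/-- Three distinct "leaves" cannot all lie on one Kempe chain. -/
lemma three_leaves (hc : G.IsProperColoringOn k D c)
    (hg : g ∈ ABset G D c α β) {a b d : G.V} (hab : a ≠ b) (had : a ≠ d) (hbd : b ≠ d)
    (hain : ∃ h ∈ compSet G D c α β g, a ∈ G.ends h)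
    (hbin : ∃ h ∈ compSet G D c α β g, b ∈ G.ends h)
    (hdin : ∃ h ∈ compSet G D c α β g, d ∈ G.ends h)
    (hdega : {h | h ∈ compSet G D c α β g ∧ a ∈ G.ends h}.ncard ≤ 1)
    (hdegb : {h | h ∈ compSet G D c α β g ∧ b ∈ G.ends h}.ncard ≤ 1)
    (hdegd : {h | h ∈ compSet G D c α β g ∧ d ∈ G.ends h}.ncard ≤ 1) : False := by
  classical
  set C := compSet G D c α β g with hC
  set VS := {v | ∃ h ∈ C, v ∈ G.ends h} with hVS
  set CF := (Set.toFinite C).toFinset with hCF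
  set VF := (Set.toFinite VS).toFinset with hVF
  have hdegF : ∀ v : G.V, (CF.filter (fun h => v ∈ G.ends h)).card =
      {h | h ∈ C ∧ v ∈ G.ends h}.ncard := by
    intro v
    rw [show {h | h ∈ C ∧ v ∈ G.ends h} = ↑(CF.filter (fun h => v ∈ G.ends h)) by
      ext h
      simp only [Finset.coe_filter, Set.mem_setOf_eq, Set.Finite.mem_toFinset, hCF],
      Set.ncard_coe_finset]
  -- handshake
  have hhand : ∑ v ∈ VF, (CF.filter (fun h => v ∈ G.ends h)).card = 2 * CF.card := by
    have h1 : ∀ v ∈ VF, (CF.filter (fun h => v ∈ G.ends h)).card =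
        ∑ h ∈ CF, (if v ∈ G.ends h then 1 else 0) := by
      intro v _; rw [Finset.card_filter]
    rw [Finset.sum_congr rfl h1, Finset.sum_comm]
    have h2 : ∀ h ∈ CF, ∑ v ∈ VF, (if v ∈ G.ends h then 1 else 0) = 2 := by
      intro h hh
      have hhC : h ∈ C := (Set.Finite.mem_toFinset _).1 hh
      obtain ⟨a', b', hab', hends'⟩ := ends_eq G h
      have : VF.filter (fun v => v ∈ G.ends h) = {a', b'} := by
        ext v
        simp only [Finset.mem_filter, Finset.mem_insert, Finset.mem_singleton,
          Set.Finite.mem_toFinset, hVF]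
        constructor
        · rintro ⟨_, hv⟩
          rw [hends', Sym2.mem_iff] at hv
          exact hv
        · intro hv
          have hv' : v ∈ G.ends h := by rw [hends', Sym2.mem_iff]; exact hv
          exact ⟨⟨h, hhC, hv'⟩, hv'⟩
      rw [← Finset.card_filter, this, Finset.card_insert_of_notMem (by simpa using hab'),
        Finset.card_singleton]
    rw [Finset.sum_congr rfl h2, Finset.sum_const, smul_eq_mul, mul_comm]
  -- the three leaves are in VF
  have haVF : a ∈ VF := (Set.Finite.mem_toFinset _).2 hain
  have hbVF : b ∈ VF := (Set.Finite.mem_toFinset _).2 hbin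
  have hdVF : d ∈ VF := (Set.Finite.mem_toFinset _).2 hdin
  have habd : ({a, b, d} : Finset G.V) ⊆ VF := by
    intro v hv
    simp only [Finset.mem_insert, Finset.mem_singleton] at hv
    rcases hv with rfl | rfl | rfl <;> assumption
  have hcard3 : ({a, b, d} : Finset G.V).card = 3 := by
    rw [Finset.card_insert_of_notMem (by simp [hab, had]),
      Finset.card_insert_of_notMem (by simp [hbd]), Finset.card_singleton]
  -- split the sum
  have hsplit : ∑ v ∈ VF \ {a, b, d}, (CF.filter (fun h => v ∈ G.ends h)).card +
      ∑ v ∈ ({a, b, d} : Finset G.V), (CF.filter (fun h => v ∈ G.ends h)).card =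
      ∑ v ∈ VF, (CF.filter (fun h => v ∈ G.ends h)).card :=
    Finset.sum_sdiff habd
  have hsum3 : ∑ v ∈ ({a, b, d} : Finset G.V), (CF.filter (fun h => v ∈ G.ends h)).card ≤ 3 := by
    rw [Finset.sum_insert (by simp [hab, had]), Finset.sum_insert (by simp [hbd]),
      Finset.sum_singleton]
    have h1 := hdegF a; have h2 := hdegF b; have h3 := hdegF d
    omega
  have hsumW : ∑ v ∈ VF \ {a, b, d}, (CF.filter (fun h => v ∈ G.ends h)).card ≤
      2 * (VF \ {a, b, d}).card := by
    rw [mul_comm]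
    refine Finset.sum_le_card_nsmul _ _ 2 ?_
    intro v _
    have h1 := hdegF v
    have h2 := comp_deg_le_two (α := α) (β := β) (g := g) hc v
    rw [← hC] at h2
    omega
  have hWcard : (VF \ {a, b, d}).card + 3 = VF.card := by
    rw [Finset.card_sdiff_of_subset habd, hcard3]
    have := Finset.card_le_card habd
    omega
  -- connectivity bound
  have hconn := conn_card G C.ncard C g le_rfl (self_mem_comp hg) (fun h hh => comp_conn h hh)
  have hVcard : VS.ncard = VF.card := Set.ncard_eq_toFinset_card _ _
  have hCcard : C.ncard = CF.card := Set.ncard_eq_toFinset_card _ _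
  rw [hVcard, hCcard] at hconn
  have key1 : 2 * CF.card ≤ 2 * (VF \ {a, b, d}).card + 3 := by
    rw [← hhand, ← hsplit]
    omega
  omega

end BFProof
namespace BFProof
open Multigraph

/-- The main fan argument: starting from an uncolored edge `e₀ ∈ E(x,y₀)` and a proper
`k`-coloring of `T \ {e₀}`, either `T` itself is properly `k`-colorable, or there is
a "tight" vertex `z`. -/
lemma fan_step (G : Multigraph) (k : ℕ) (T : Set G.E) (e₀ : G.E) (x y₀ : G.V) (c : G.E → ℕ)
    (he₀T : e₀ ∈ T)
    (hc : G.IsProperColoringOn k (T \ {e₀}) c)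
    (hxk : (inc G (T \ {e₀}) x).ncard < k) :
    ∀ (n p : ℕ) (e : ℕ → G.E) (y : ℕ → G.V),
      FanHyp G k T e₀ x y₀ c p e y →
      {h | h ∈ T \ {e₀} ∧ x ∈ G.ends h ∧ ∀ i ≤ p, h ≠ e i}.ncard ≤ n →
      (∃ c', G.IsProperColoringOn k T c') ∨
      ∃ z, z ≠ x ∧ k + 1 ≤ (inc G (T \ {e₀}) z).ncard + (par G T x z).ncard := by
  classical
  intro n
  induction n using Nat.strong_induction_on with
  | _ n ih =>
  intro p e y F hmeas
  set D := T \ {e₀} with hD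
  set U : Set ℕ := (fun l => c (e (l + 1))) '' {l | l < p ∧ y l = y p} with hU
  by_cases hAB : ∃ β ∈ G.missingOn k D c (y p), β ∉ U
  · obtain ⟨β, hβ, hβU⟩ := hAB
    have hfreshβ : ∀ l, l < p → y l = y p → c (e (l + 1)) ≠ β := by
      intro l hl hyl hcon
      exact hβU ⟨l, ⟨hl, hyl⟩, hcon⟩
    by_cases hβx : β ∈ G.missingOn k D c x
    · exact Or.inl (win F hc hβx hβ hfreshβ)
    · -- β is present at x on an edge g
      have hgex : ∃ g, g ∈ D ∧ x ∈ G.ends g ∧ c g = β := by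
        by_contra hno
        push_neg at hno
        exact hβx ⟨hβ.1, fun h hh hx hcon => hno h hh hx hcon⟩
      obtain ⟨g, hgD, hgx, hgβ⟩ := hgex
      by_cases hgfan : ∃ j ≤ p, g = e j
      · -- the Kempe chain case
        obtain ⟨j, hjp, hgej⟩ := hgfan
        have hj1 : 1 ≤ j := by
          rcases Nat.eq_zero_or_pos j with h0 | h0
          · exfalso; apply hgD.2; rw [hgej, h0, F.e0]; rfl
          · exact h0
        have hjplt : j < p := by
          rcases lt_or_eq_of_le hjp with h | h
          · exact h
          · exfalso
            apply missing_ne hβ (F.mem_Dc hj1 hjp) (h ▸ F.y_mem hjp)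
            rw [← hgej]; exact hgβ
        set i := j - 1 with hidef
        have hji : j = i + 1 := by omega
        have hip : i < p := by omega
        have hcβ : c (e (i + 1)) = β := by rw [← hji, ← hgej]; exact hgβ
        have hfanj : β ∈ G.missingOn k D c (y i) := hcβ ▸ F.fan i hip
        have hyi_ne : y i ≠ y p := by
          intro hcon
          exact hβU ⟨i, ⟨hip, hcon⟩, hcβ⟩
        obtain ⟨α, hα⟩ := exists_missing c hxk
        have hαβ : α ≠ β := by
          intro hcon
          exact missing_ne hα hgD hgx (hgβ.trans hcon.symm)
        have hgAB : g ∈ ABset G D c α β := ⟨hgD, Or.inr hgβ⟩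
        set C := compSet G D c α β g with hCdef
        have hgC : g ∈ C := self_mem_comp hgAB
        -- fan edges other than g are not α/β-colored
        have hfan_notab : ∀ l, l < p → e (l + 1) ≠ g →
            c (e (l + 1)) ≠ α ∧ c (e (l + 1)) ≠ β := by
          intro l hl hne
          have hmem : e (l + 1) ∈ D := F.mem_Dc (Nat.le_add_left 1 l) (by omega)
          constructor
          · exact missing_ne hα hmem (F.x_mem (by omega))
          · intro hcon
            exact hc.2 _ hmem g hgD hne ⟨x, F.x_mem (by omega), hgx⟩ (hcon.trans hgβ.symm)
        have hfan_notC : ∀ l, l < p → e (l + 1) ≠ g → e (l + 1) ∉ C := by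
          intro l hl hne hmem
          obtain ⟨h1, h2⟩ := hfan_notab l hl hne
          rcases (comp_sub_ab hmem).2 with h | h
          · exact h1 h
          · exact h2 h
        have hel_eq : ∀ l, e (l + 1) = g → l + 1 ≤ p → l = i := by
          intro l hel hlp
          have := F.inj (l + 1) hlp (i + 1) (by omega) (by rw [hel, hgej, hji])
          omega
        set c₂ := swapC c α β C with hc₂def
        have hc₂ : G.IsProperColoringOn k D c₂ := swap_proper hc hαβ hα.1 hβ.1
        have hβx₂ : β ∈ G.missingOn k D c₂ x :=
          swap_miss_beta hc hαβ hα hgC hgx hgβ hβ.1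
        by_cases hyiC : ∃ h ∈ C, (y i) ∈ G.ends h
        · -- Case 2: `y i` is on the chain, so `y p` is not; swap and rotate the full fan
          have hypC : ¬∃ h ∈ C, (y p) ∈ G.ends h := by
            intro hypC
            have hxC : ∃ h ∈ C, x ∈ G.ends h := ⟨g, hgC, hgx⟩
            refine three_leaves hc hgAB (F.xy_ne (by omega : i ≤ p))
              (F.xy_ne le_rfl) hyi_ne hxC hyiC hypC ?_ ?_ ?_
            · refine comp_deg_le_one hc x β ?_
              intro h hh hx'
              rcases (comp_sub_ab hh).2 with h1 | h1
              · exact absurd h1 (missing_ne hα (comp_sub_ab hh).1 hx')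
              · exact h1
            · refine comp_deg_le_one hc (y i) α ?_
              intro h hh hy'
              rcases (comp_sub_ab hh).2 with h1 | h1
              · exact h1
              · exact absurd h1 (missing_ne hfanj (comp_sub_ab hh).1 hy')
            · refine comp_deg_le_one hc (y p) α ?_
              intro h hh hy'
              rcases (comp_sub_ab hh).2 with h1 | h1
              · exact h1
              · exact absurd h1 (missing_ne hβ (comp_sub_ab hh).1 hy')
          have F₂ : FanHyp G k T e₀ x y₀ c₂ p e y := by
            refine ⟨F.e0, F.y0, F.mem, F.ends_, F.inj, ?_⟩
            intro l hl
            by_cases hel : e (l + 1) = g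
            · have hli : l = i := hel_eq l hel (by omega)
              subst hli
              rw [hel, hc₂def, swapC_of_beta hαβ hgC hgβ]
              exact swap_miss_alpha hαβ hyiC hfanj hα.1
            · rw [show c₂ (e (l+1)) = c (e (l+1)) from
                swapC_of_not_mem (hfan_notC l hl hel)]
              obtain ⟨h1, h2⟩ := hfan_notab l hl hel
              exact swap_miss_other h1 h2 hαβ (F.fan l hl)
          have hβyp₂ : β ∈ G.missingOn k D c₂ (y p) := swap_miss_of_not_touched hypC hβ
          refine Or.inl (win F₂ hc₂ hβx₂ hβyp₂ ?_)
          intro l hl hyl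
          by_cases hel : e (l + 1) = g
          · exact absurd ((hel_eq l hel (by omega)) ▸ hyl) hyi_ne
          · rw [show c₂ (e (l+1)) = c (e (l+1)) from
              swapC_of_not_mem (hfan_notC l hl hel)]
            exact (hfan_notab l hl hel).2
        · -- Case 1: `y i` is not on the chain; swap and rotate the fan up to `i`
          have F₂ : FanHyp G k T e₀ x y₀ c₂ i e y := by
            refine ⟨F.e0, F.y0, fun m hm => F.mem m (by omega),
              fun m hm => F.ends_ m (by omega),
              fun m hm m' hm' => F.inj m (by omega) m' (by omega), ?_⟩
            intro l hl
            have hel : e (l + 1) ≠ g := by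
              intro hel
              have := hel_eq l hel (by omega)
              omega
            rw [show c₂ (e (l+1)) = c (e (l+1)) from
              swapC_of_not_mem (hfan_notC l (by omega) hel)]
            obtain ⟨h1, h2⟩ := hfan_notab l (by omega) hel
            exact swap_miss_other h1 h2 hαβ (F.fan l (by omega))
          have hβyi₂ : β ∈ G.missingOn k D c₂ (y i) := swap_miss_of_not_touched hyiC hfanj
          refine Or.inl (win F₂ hc₂ hβx₂ hβyi₂ ?_)
          intro l hl hyl
          have hel : e (l + 1) ≠ g := by
            intro hel
            have := hel_eq l hel (by omega)
            omega
          rw [show c₂ (e (l+1)) = c (e (l+1)) from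
            swapC_of_not_mem (hfan_notC l (by omega) hel)]
          exact (hfan_notab l (by omega) hel).2
      · -- extension of the fan
        push_neg at hgfan
        obtain ⟨w, hwx, hw⟩ := mem_other hgx
        set e' : ℕ → G.E := fun m => if m ≤ p then e m else g with he'
        set y' : ℕ → G.V := fun m => if m ≤ p then y m else w with hy'
        have he'le : ∀ m, m ≤ p → e' m = e m := fun m hm => if_pos hm
        have hy'le : ∀ m, m ≤ p → y' m = y m := fun m hm => if_pos hm
        have he'succ : e' (p + 1) = g := if_neg (by omega)
        have hy'succ : y' (p + 1) = w := if_neg (by omega)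
        have F' : FanHyp G k T e₀ x y₀ c (p + 1) e' y' := by
          refine ⟨?_, ?_, ?_, ?_, ?_, ?_⟩
          · rw [he'le 0 (Nat.zero_le p)]; exact F.e0
          · rw [hy'le 0 (Nat.zero_le p)]; exact F.y0
          · intro m hm
            rcases Nat.lt_or_ge m (p + 1) with h | h
            · rw [he'le m (by omega)]; exact F.mem m (by omega)
            · have : m = p + 1 := by omega
              rw [this, he'succ]; exact hgD.1
          · intro m hm
            rcases Nat.lt_or_ge m (p + 1) with h | h
            · rw [he'le m (by omega), hy'le m (by omega)]; exact F.ends_ m (by omega)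
            · have : m = p + 1 := by omega
              rw [this, he'succ, hy'succ]; exact hw
          · intro m hm m' hm' hee
            rcases Nat.lt_or_ge m (p + 1) with h | h <;>
              rcases Nat.lt_or_ge m' (p + 1) with h' | h'
            · rw [he'le m (by omega), he'le m' (by omega)] at hee
              exact F.inj m (by omega) m' (by omega) hee
            · have hm'e : m' = p + 1 := by omega
              rw [he'le m (by omega), hm'e, he'succ] at hee
              exact absurd hee.symm (hgfan m (by omega))
            · have hme : m = p + 1 := by omega
              rw [he'le m' (by omega), hme, he'succ] at hee
              exact absurd hee (hgfan m' (by omega))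
            · omega
          · intro l hl
            rcases Nat.lt_or_ge l p with h | h
            · rw [he'le (l+1) (by omega), hy'le l (by omega)]
              exact F.fan l h
            · have hle : l = p := by omega
              rw [hle, he'succ, hy'le p le_rfl, hgβ]
              exact hβ
        -- the measure decreases
        set S := {h | h ∈ T \ {e₀} ∧ x ∈ G.ends h ∧ ∀ i ≤ p, h ≠ e i} with hS
        set S' := {h | h ∈ T \ {e₀} ∧ x ∈ G.ends h ∧ ∀ i ≤ p + 1, h ≠ e' i} with hS'
        have hgS : g ∈ S := ⟨hgD, hgx, hgfan⟩
        have hSS : S' = S \ {g} := by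
          ext h
          constructor
          · rintro ⟨h1, h2, h3⟩
            refine ⟨⟨h1, h2, fun m hm => ?_⟩, ?_⟩
            · rw [← he'le m hm]; exact h3 m (by omega)
            · have := h3 (p + 1) le_rfl
              rw [he'succ] at this
              simpa using this
          · rintro ⟨⟨h1, h2, h3⟩, h4⟩
            refine ⟨h1, h2, fun m hm => ?_⟩
            rcases Nat.lt_or_ge m (p + 1) with hlt | hge
            · rw [he'le m (by omega)]; exact h3 m (by omega)
            · have : m = p + 1 := by omega
              rw [this, he'succ]
              simpa using h4
        have hlt : S'.ncard < S.ncard := by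
          rw [hSS]
          exact Set.ncard_diff_singleton_lt_of_mem hgS (Set.toFinite _)
        have hn1 : 1 ≤ n := by
          have h1 : 1 ≤ S.ncard := by omega
          omega
        exact ih S'.ncard (by omega) (p + 1) e' y' F' le_rfl
  · -- tight vertex case
    push_neg at hAB
    refine Or.inr ⟨y p, (F.xy_ne le_rfl).symm, ?_⟩
    have hfin_miss : (G.missingOn k D c (y p)).Finite :=
      Set.Finite.subset (Set.finite_Icc 1 k) (fun γ hγ => hγ.1)
    set LS := {l | l < p ∧ y l = y p} with hLS
    set LS' := {l | l ≤ p ∧ y l = y p} with hLS'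
    have hLSfin : LS.Finite := Set.Finite.subset (Set.finite_Iio p) (fun l hl => hl.1)
    have hLS'fin : LS'.Finite := Set.Finite.subset (Set.finite_Iic p) (fun l hl => hl.1)
    -- k ≤ |miss| + |inc|
    have hsub : Set.Icc 1 k ⊆ G.missingOn k D c (y p) ∪ (c '' (inc G D (y p))) := by
      intro γ hγ
      by_cases hmem : γ ∈ G.missingOn k D c (y p)
      · exact Or.inl hmem
      · right
        rw [missingOn, Set.mem_setOf_eq] at hmem
        push_neg at hmem
        obtain ⟨h, hh, hyh, hch⟩ := hmem hγ
        exact ⟨h, ⟨hh, hyh⟩, hch⟩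
    have h2 : k ≤ (G.missingOn k D c (y p)).ncard + (inc G D (y p)).ncard := by
      have ha : k ≤ ((G.missingOn k D c (y p)) ∪ (c '' (inc G D (y p)))).ncard := by
        calc k = (Set.Icc 1 k).ncard := (ncard_Icc k).symm
          _ ≤ _ := Set.ncard_le_ncard hsub
            (Set.Finite.union hfin_miss (Set.Finite.image _ (Set.toFinite _)))
      have hb := Set.ncard_union_le (G.missingOn k D c (y p)) (c '' (inc G D (y p)))
      have hcc := Set.ncard_image_le (s := inc G D (y p)) (f := c) (Set.toFinite _)
      omega
    -- |miss| ≤ |LS|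
    have h3 : (G.missingOn k D c (y p)).ncard ≤ LS.ncard := by
      have himg : G.missingOn k D c (y p) ⊆ (fun l => c (e (l + 1))) '' LS := fun γ hγ =>
        hAB γ hγ
      calc (G.missingOn k D c (y p)).ncard
          ≤ ((fun l => c (e (l + 1))) '' LS).ncard :=
            Set.ncard_le_ncard himg (Set.Finite.image _ hLSfin)
        _ ≤ LS.ncard := Set.ncard_image_le hLSfin
    -- |LS| + 1 ≤ |par|
    have h4 : LS.ncard + 1 ≤ LS'.ncard := by
      have hins : insert p LS ⊆ LS' := by
        intro l hl
        rcases Set.mem_insert_iff.1 hl with rfl | hl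
        · exact ⟨le_rfl, rfl⟩
        · exact ⟨by have := hl.1; omega, hl.2⟩
      have hnotin : p ∉ LS := fun hcon => by simp [hLS] at hcon
      calc LS.ncard + 1 = (insert p LS).ncard :=
            (Set.ncard_insert_of_notMem hnotin hLSfin).symm
        _ ≤ LS'.ncard := Set.ncard_le_ncard hins hLS'fin
    have h5 : LS'.ncard ≤ (par G T x (y p)).ncard := by
      refine Set.ncard_le_ncard_of_injOn e ?_ ?_ (Set.toFinite _)
      · intro l hl
        exact ⟨F.mem l hl.1, by rw [F.ends_ l hl.1, hl.2]⟩
      · intro l hl l' hl' hee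
        exact F.inj l hl.1 l' hl'.1 hee
    omega

/-- Wrapper: from an uncolorable `T` and a colorable `T \ {e₀}` produce a tight vertex. -/
lemma extend_lemma (G : Multigraph) (k : ℕ) (T : Set G.E) (e₀ : G.E) (x y₀ : G.V)
    (c : G.E → ℕ) (he₀T : e₀ ∈ T) (hends : G.ends e₀ = s(x, y₀))
    (hc : G.IsProperColoringOn k (T \ {e₀}) c)
    (hTdeg : (inc G T x).ncard ≤ k)
    (hnc : ¬∃ c', G.IsProperColoringOn k T c') :
    ∃ z, z ≠ x ∧ k + 1 ≤ (inc G (T \ {e₀}) z).ncard + (par G T x z).ncard := by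
  have he₀inc : e₀ ∈ inc G T x := ⟨he₀T, by rw [hends]; exact Sym2.mem_iff.2 (Or.inl rfl)⟩
  have hxk : (inc G (T \ {e₀}) x).ncard < k := by
    have hsub : inc G (T \ {e₀}) x ⊆ inc G T x \ {e₀} :=
      fun h hh => ⟨⟨hh.1.1, hh.2⟩, hh.1.2⟩
    have hlt : (inc G T x \ {e₀}).ncard < (inc G T x).ncard :=
      Set.ncard_diff_singleton_lt_of_mem he₀inc (Set.toFinite _)
    have hle := Set.ncard_le_ncard hsub (Set.toFinite _)
    omega
  have F0 : FanHyp G k T e₀ x y₀ c 0 (fun _ => e₀) (fun _ => y₀) := by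
    refine ⟨rfl, rfl, fun i _ => he₀T, fun i _ => hends, fun i hi j hj _ => by omega,
      fun i hi => absurd hi (by omega)⟩
  rcases fan_step G k T e₀ x y₀ c he₀T hc hxk _ 0 _ _ F0 le_rfl with h | h
  · exact absurd h hnc
  · exact h

end BFProof
/-- **Lemma 3.3 (generalized Berge–Fournier).** Let `M` and `M'` be two vertex-disjoint
matchings of `G` such that every edge of `M'` is fully `G`-saturated and `M'` is maximal
subject to this property (every fully `G`-saturated edge shares a vertex with some edge of
`M ∪ M'`). Then `χ'(G - (M ∪ M')) ≤ Δ(G) + μ(G) - 1`. -/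
theorem berge_fournier_generalized (G : Multigraph) (M M' : Set G.E)
    (hM : G.IsMatching M) (hM' : G.IsMatching M')
    (hdisj : ∀ e ∈ M, ∀ f ∈ M', ∀ v : G.V, v ∈ G.ends e → v ∉ G.ends f)
    (hsat : ∀ e ∈ M', G.IsFullySaturated e)
    (hmax : ∀ f : G.E, G.IsFullySaturated f →
      ∃ g ∈ M ∪ M', ∃ v : G.V, v ∈ G.ends f ∧ v ∈ G.ends g) :
    G.chromIndexOn (M ∪ M')ᶜ ≤ G.maxDegree + G.maxMult - 1 := by
  classical
  open BFProof in
  set S := (M ∪ M')ᶜ with hSdef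
  set k := G.maxDegree + G.maxMult - 1 with hkdef
  have hcol : ∀ (n : ℕ) (T : Set G.E), T ⊆ S → T.ncard ≤ n →
      ∃ c, G.IsProperColoringOn k T c := by
    intro n
    induction n using Nat.strong_induction_on with
    | _ n ih =>
    intro T hTS hTn
    rcases Set.eq_empty_or_nonempty T with hTe | ⟨e₀, he₀⟩
    · exact ⟨fun _ => 1, fun e he => absurd (hTe ▸ he) (Set.notMem_empty e),
        fun e he => absurd (hTe ▸ he) (Set.notMem_empty e)⟩
    by_contra hnc
    obtain ⟨x, y₀, hxy, hends⟩ := ends_eq G e₀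
    -- basic parameter bounds
    have hΔ1 : 1 ≤ G.maxDegree := by
      have h1 : 0 < {e : G.E | x ∈ G.ends e}.ncard :=
        (Set.ncard_pos (Set.toFinite _)).2
          ⟨e₀, show x ∈ G.ends e₀ by rw [hends]; exact Sym2.mem_iff.2 (Or.inl rfl)⟩
      have h2 := degree_le_maxDegree G x
      rw [Multigraph.degree] at h2
      omega
    have hμ1 : 1 ≤ G.maxMult := by
      have h1 : 0 < {e : G.E | G.ends e = s(x, y₀)}.ncard :=
        (Set.ncard_pos (Set.toFinite _)).2 ⟨e₀, show G.ends e₀ = s(x, y₀) from hends⟩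
      have h2 := mult_le_maxMult G x y₀
      rw [Multigraph.mult] at h2
      omega
    have hk1 : k + 1 = G.maxDegree + G.maxMult := by omega
    have hT1 : 1 ≤ T.ncard := (Set.ncard_pos (Set.toFinite _)).2 ⟨e₀, he₀⟩
    -- smaller sets are colorable
    have hsmall : ∀ e ∈ T, ∃ c, G.IsProperColoringOn k (T \ {e}) c := by
      intro e he
      refine ih (T \ {e}).ncard ?_ _ (fun h hh => hTS hh.1) le_rfl
      have := Set.ncard_diff_singleton_lt_of_mem he (Set.toFinite T)
      omega
    have hTdegbound : ∀ v, (inc G T v).ncard ≤ k := by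
      intro v
      have h1 := inc_ncard_le_degree G T v
      have h2 := degree_le_maxDegree G v
      omega
    -- tight-vertex extraction
    have hextract : ∀ (e₁ : G.E) (x1 y1 : G.V), e₁ ∈ T → G.ends e₁ = s(x1, y1) →
        ∃ z, z ≠ x1 ∧ (inc G T z).ncard = G.maxDegree ∧ G.degree z = G.maxDegree ∧
          (par G T x1 z).ncard = G.maxMult ∧ G.mult x1 z = G.maxMult := by
      intro e₁ x1 y1 he₁ hends1
      obtain ⟨c, hcprop⟩ := hsmall e₁ he₁
      obtain ⟨z, hzx, hzcount⟩ := extend_lemma G k T e₁ x1 y1 c he₁ hends1 hcprop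
        (hTdegbound x1) hnc
      have a1 : (inc G (T \ {e₁}) z).ncard ≤ (inc G T z).ncard :=
        Set.ncard_le_ncard (fun h hh => ⟨hh.1.1, hh.2⟩) (Set.toFinite _)
      have a2 := inc_ncard_le_degree G T z
      have a3 := degree_le_maxDegree G z
      have b1 := par_ncard_le_mult G T x1 z
      have b2 := mult_le_maxMult G x1 z
      exact ⟨z, hzx, by omega, by omega, by omega, by omega⟩
    obtain ⟨z1, hz1x, hz1inc, hz1deg, hz1par, hz1mult⟩ := hextract e₀ x y₀ he₀ hends
    have hpar1 : 0 < (par G T x z1).ncard := by rw [hz1par]; omega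
    obtain ⟨e₁, he₁T, he₁ends⟩ := (Set.ncard_pos (Set.toFinite _)).1 hpar1
    obtain ⟨z2, hz2z1, hz2inc, hz2deg, hz2par, hz2mult⟩ := hextract e₁ z1 x he₁T
      (by rw [he₁ends]; exact Sym2.eq_swap)
    have hpar2 : 0 < (par G T z1 z2).ncard := by rw [hz2par]; omega
    obtain ⟨f, hfT, hfends⟩ := (Set.ncard_pos (Set.toFinite _)).1 hpar2
    have hsatf : G.IsFullySaturated f := ⟨z1, z2, hfends, hz1deg, hz2deg, hz2mult⟩
    obtain ⟨gE, hgE, v, hvf, hvg⟩ := hmax f hsatf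
    have hv12 : v = z1 ∨ v = z2 := by
      rw [hfends, Sym2.mem_iff] at hvf
      exact hvf
    have hfull : ∀ z : G.V, (inc G T z).ncard = G.maxDegree → v = z → gE ∈ T := by
      intro z hzinc hvz
      have hdegz : {e : G.E | z ∈ G.ends e}.ncard = G.degree z := rfl
      have hdegle := degree_le_maxDegree G z
      have heq : inc G T z = {e : G.E | z ∈ G.ends e} := by
        refine Set.eq_of_subset_of_ncard_le (fun h hh => hh.2) ?_ (Set.toFinite _)
        omega
      have : gE ∈ inc G T z := by
        rw [heq]
        exact hvz ▸ hvg
      exact this.1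
    have hgT : gE ∈ T := by
      rcases hv12 with h | h
      · exact hfull z1 hz1inc h
      · exact hfull z2 hz2inc h
    have : gE ∈ S := hTS hgT
    rw [hSdef] at this
    exact this hgE
  obtain ⟨c, hc⟩ := hcol S.ncard S (subset_refl S) le_rfl
  exact Nat.sInf_le ⟨c, hc⟩
end
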